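/- arXiv:2306.13225 — 7 statements merged into one kernel-verified Lean document; each statement's English description precedes it below -/
import Mathlib

section
/- Petridis's form of Plünnecke's inequality: let A, B be nonempty finite subsets of ℤ, and suppose K = |A+B|/|A| equals the minimum of |A'+B|/|A'| over all nonempty subsets A' of A. Then for every ℓ ∈ ℕ, |A + ℓ·B| ≤ K^ℓ · |A|, where ℓ·B denotes the ℓ-fold iterated sumset B + B + ⋯ + B (ℓ times). -/
open Pointwise

theorem petridis_plunnecke (A B : Finset ℤ) (hA : A.Nonempty) (hB : B.Nonempty) (K : ℝ)
    (hK : K = ((A + B).card : ℝ) / A.card)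
    (hmin : ∀ A' ⊆ A, A'.Nonempty → K ≤ ((A' + B).card : ℝ) / A'.card) :
    ∀ ℓ : ℕ, ((A + ℓ • B).card : ℝ) ≤ K ^ ℓ * A.card := by
  have hA0 : (0 : ℝ) < A.card := by exact_mod_cast Finset.card_pos.2 hA
  have hKA : K * A.card = (A + B).card := by rw [hK]; field_simp
  have hK0 : 0 ≤ K := by rw [hK]; positivity
  have hAB : ∀ A' ⊆ A, (A + B).card * A'.card ≤ (A' + B).card * A.card := by
    intro A' hA'
    rcases A'.eq_empty_or_nonempty with rfl | hne
    · simp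
    have h1 : (0 : ℝ) < A'.card := by exact_mod_cast Finset.card_pos.2 hne
    have := hmin A' hA' hne
    have : ((A + B).card : ℝ) * A'.card ≤ ((A' + B).card : ℝ) * A.card := by
      rw [← hKA]; rw [le_div_iff₀ h1] at this
      nlinarith
    exact_mod_cast this
  intro ℓ
  induction ℓ with
  | zero => simp [zero_nsmul]
  | succ n ih =>
    have key := Finset.pluennecke_petridis_inequality_add (n • B) hAB
    have key' : ((A + B + n • B).card : ℝ) * A.card ≤ (A + B).card * (A + n • B).card := by
      have e1 : n • B + A + B = A + B + n • B := by abel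
      have e2 : n • B + A = A + n • B := add_comm _ _
      rw [e1, e2] at key
      exact_mod_cast key
    have hrw : A + (n + 1) • B = A + B + n • B := by
      rw [succ_nsmul]; abel
    rw [hrw]
    rw [← hKA] at key'
    have : ((A + B + n • B).card : ℝ) ≤ K * (A + n • B).card := by
      rw [← mul_le_mul_iff_of_pos_right hA0]
      calc ((A + B + n • B).card : ℝ) * A.card ≤ K * A.card * (A + n • B).card := key'
        _ = K * (A + n • B).card * A.card := by ring
    calc ((A + B + n • B).card : ℝ) ≤ K * (A + n • B).card := this
      _ ≤ K * (K ^ n * A.card) := by apply mul_le_mul_of_nonneg_left ih hK0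
      _ = K ^ (n + 1) * A.card := by ring
end

section
/- If B ⊆ ℤ^k is not covered by n parallel hyperplanes, then for any positive integer ℓ the ℓ-fold iterated sumset ℓ·B is not covered by ℓ·n parallel hyperplanes. -/
open Pointwise

/-- `B ⊆ ℤ^k` is covered by `n` parallel hyperplanes: there is a nonzero linear
functional `φ : ℝ^k → ℝ` and `n` constants such that every point of `B` (viewed in `ℝ^k`)
lies on one of the corresponding level sets. -/
def CoveredByParallelHyperplanes (k n : ℕ) (B : Set (Fin k → ℤ)) : Prop :=
  ∃ φ : (Fin k → ℝ) →ₗ[ℝ] ℝ, φ ≠ 0 ∧ ∃ c : Fin n → ℝ,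
    ∀ x ∈ B, ∃ i : Fin n, φ (fun j => (x j : ℝ)) = c i

/-- Lower bound for the cardinality of an iterated sumset of a finite set of reals. -/
lemma nsmul_card_lower {s : Finset ℝ} (hs : s.Nonempty) :
    ∀ ℓ : ℕ, 0 < ℓ → ℓ * (s.card - 1) + 1 ≤ (ℓ • s).card := by
  intro ℓ hℓ
  induction ℓ with
  | zero => omega
  | succ m ih =>
    rcases Nat.eq_zero_or_pos m with hm | hm
    · subst hm
      simp only [zero_add, one_nsmul, one_mul]
      have := Finset.card_pos.mpr hs
      omega
    · have h1 := ih hm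
      have hne : (m • s).Nonempty := Finset.card_pos.mp (by omega)
      have hcd := cauchy_davenport_add_of_linearOrder_isCancelAdd hne hs
      have hsucc : (m + 1) • s = m • s + s := succ_nsmul s m
      rw [hsucc]
      have hcard1 : 1 ≤ s.card := Finset.card_pos.mpr hs
      rw [Nat.succ_mul]
      omega

theorem iterated_sumset_not_covered (k n ℓ : ℕ) (hn : 0 < n) (hℓ : 0 < ℓ)
    (B : Set (Fin k → ℤ)) (hB : ¬ CoveredByParallelHyperplanes k n B) :
    ¬ CoveredByParallelHyperplanes k (ℓ * n) (ℓ • B) := by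
  rintro ⟨φ, hφ, c, hc⟩
  apply hB
  refine ⟨φ, hφ, ?_⟩
  rcases Set.eq_empty_or_nonempty B with hBe | hBne
  · exact ⟨fun _ => 0, by simp [hBe]⟩
  -- The additive map from ℤ^k to ℝ
  set f : (Fin k → ℤ) →+ ℝ :=
    φ.toAddMonoidHom.comp ((Int.castAddHom ℝ).compLeft (Fin k)) with hf
  have hfval : ∀ x : Fin k → ℤ, f x = φ (fun j => (x j : ℝ)) := fun x => rfl
  set S : Set ℝ := f '' B with hS
  -- image of the sumset
  have himg : f '' (ℓ • B) = ℓ • S := Set.image_nsmul f B ℓ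
  set T : Finset ℝ := Finset.image c Finset.univ with hT
  have hTcard : T.card ≤ ℓ * n := le_trans (Finset.card_image_le) (by simp)
  have hsub : ℓ • S ⊆ ↑T := by
    rw [← himg]
    rintro y ⟨x, hx, rfl⟩
    obtain ⟨i, hi⟩ := hc x hx
    exact Finset.mem_coe.mpr (Finset.mem_image.mpr ⟨i, Finset.mem_univ i, ((hfval x).trans hi).symm⟩)
  -- any finite subset of S has at most n elements
  have key : ∀ s : Finset ℝ, ↑s ⊆ S → s.card ≤ n := by
    intro s hsS
    by_contra hcard
    push_neg at hcard
    have hsne : s.Nonempty := Finset.card_pos.mp (by omega)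
    have hco : (↑(ℓ • s) : Set ℝ) = ℓ • (↑s : Set ℝ) := Finset.coe_nsmul s ℓ
    have hsm : ℓ • (↑s : Set ℝ) ⊆ ℓ • S := Set.nsmul_subset_nsmul_left hsS
    have hsubT : ℓ • s ⊆ T := by
      intro y hy
      have : y ∈ (↑(ℓ • s) : Set ℝ) := hy
      rw [hco] at this
      exact hsub (hsm this)
    have h1 := nsmul_card_lower hsne ℓ hℓ
    have h2 : (ℓ • s).card ≤ T.card := Finset.card_le_card hsubT
    have h3 : ℓ * n ≤ ℓ * (s.card - 1) := Nat.mul_le_mul_left ℓ (by omega)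
    omega
  -- S is finite
  have hSfin : S.Finite := by
    by_contra hinf
    obtain ⟨s, hsS, hscard⟩ := Set.Infinite.exists_subset_card_eq hinf (n + 1)
    have := key s hsS
    omega
  set L : List ℝ := hSfin.toFinset.toList with hL
  have hLlen : L.length ≤ n := by
    rw [hL, Finset.length_toList]
    exact key hSfin.toFinset (by simp)
  refine ⟨fun i => L.getD i 0, ?_⟩
  intro x hx
  have hxS : f x ∈ S := ⟨x, hx, rfl⟩
  have hxL : f x ∈ L := by
    rw [hL, Finset.mem_toList]
    simpa using hxS
  obtain ⟨i, hi, hival⟩ := List.mem_iff_getElem.mp hxL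
  refine ⟨⟨i, lt_of_lt_of_le hi hLlen⟩, ?_⟩
  rw [← hfval x, ← hival]
  exact (List.getD_eq_getElem L 0 hi).symm
end

section
/- For nonempty finite sets A, B ⊆ ℤ^d, |A + B + {0,1}^d|^{1/d} ≥ |A|^{1/d} + |B|^{1/d}, where {0,1}^d denotes the set of vertices of the unit cube. -/
open MeasureTheory Set Pointwise

namespace BMaux
variable {d : ℕ}

abbrev Bx (d : ℕ) := (Fin d → ℝ) × (Fin d → ℝ)

def box (p : Bx d) : Set (Fin d → ℝ) := Set.univ.pi fun i => Set.Ico (p.1 i) (p.2 i)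

def nd (p : Bx d) : Prop := ∀ i, p.1 i < p.2 i

noncomputable instance : DecidablePred (nd (d := d)) := fun _ => Classical.dec _

lemma mem_box {p : Bx d} {x : Fin d → ℝ} : x ∈ box p ↔ ∀ i, p.1 i ≤ x i ∧ x i < p.2 i := by
  simp [box, Set.mem_pi, Set.mem_Ico]

lemma box_measurable (p : Bx d) : MeasurableSet (box p) :=
  MeasurableSet.univ_pi fun i => measurableSet_Ico

lemma vol_box (p : Bx d) : volume (box p) = ∏ i, ENNReal.ofReal (p.2 i - p.1 i) := by
  rw [box, volume_pi_pi]
  simp [Real.volume_Ico]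

lemma box_empty_of_not_nd {p : Bx d} (h : ¬ nd p) : box p = ∅ := by
  rw [nd] at h
  push_neg at h
  obtain ⟨i, hi⟩ := h
  ext x
  simp only [mem_box, Set.mem_empty_iff_false, iff_false, not_forall]
  exact ⟨i, fun ⟨h1, h2⟩ => absurd (h1.trans_lt h2) (not_lt.2 hi)⟩

lemma vol_box_lt_top (p : Bx d) : volume (box p) < ⊤ := by
  rw [vol_box]
  exact ENNReal.prod_lt_top fun i _ => ENNReal.ofReal_lt_top

lemma vol_box_pos {p : Bx d} (h : nd p) : 0 < volume (box p) := by
  rw [vol_box]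
  exact CanonicallyOrderedAdd.prod_pos.2 fun i _ => ENNReal.ofReal_pos.2 (sub_pos.2 (h i))

-- 1D sum of Ico's
lemma Ico_add_Ico {a b c e : ℝ} (h1 : a < b) (h2 : c < e) :
    Set.Ico a b + Set.Ico c e = Set.Ico (a + c) (b + e) := by
  ext z
  constructor
  · rintro ⟨x, hx, y, hy, rfl⟩
    exact ⟨add_le_add hx.1 hy.1, add_lt_add hx.2 hy.2⟩
  · rintro ⟨hz1, hz2⟩
    by_cases hc : z < b + c
    · exact ⟨z - c, ⟨le_sub_iff_add_le.2 hz1, sub_lt_iff_lt_add.2 hc⟩, c, ⟨le_refl c, h2⟩, by ring⟩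
    · push_neg at hc
      set x := b - min (b - a) (b + e - z) / 2 with hxdef
      have hmin : 0 < min (b - a) (b + e - z) := lt_min (by linarith) (by linarith)
      refine ⟨x, ⟨?_, ?_⟩, z - x, ⟨?_, ?_⟩, by ring⟩
      · have : min (b - a) (b + e - z) ≤ b - a := min_le_left _ _
        simp only [hxdef]; linarith
      · simp only [hxdef]; linarith
      · simp only [hxdef]; linarith [min_le_left (b - a) (b + e - z)]
      · have : min (b - a) (b + e - z) ≤ b + e - z := min_le_right _ _
        simp only [hxdef]; linarith

lemma box_add_box {p q : Bx d} (hp : nd p) (hq : nd q) : box p + box q = box (p + q) := by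
  ext z
  constructor
  · rintro ⟨x, hx, y, hy, rfl⟩
    rw [mem_box] at hx hy ⊢
    intro i
    exact ⟨add_le_add (hx i).1 (hy i).1, add_lt_add (hx i).2 (hy i).2⟩
  · intro hz
    rw [mem_box] at hz
    have h1d : ∀ i, ∃ x ∈ Set.Ico (p.1 i) (p.2 i), ∃ y ∈ Set.Ico (q.1 i) (q.2 i), x + y = z i := by
      intro i
      have := Ico_add_Ico (hp i) (hq i)
      have hzi : z i ∈ Set.Ico (p.1 i + q.1 i) (p.2 i + q.2 i) := ⟨(hz i).1, (hz i).2⟩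
      rw [← this] at hzi
      exact hzi
    choose x hx y hy hxy using h1d
    exact ⟨x, mem_box.2 fun i => ⟨(hx i).1, (hx i).2⟩, y, mem_box.2 fun i => ⟨(hy i).1, (hy i).2⟩,
      funext hxy⟩



def bset : List (Bx d) → Set (Fin d → ℝ)
  | [] => ∅
  | p :: l => box p ∪ bset l

lemma bset_nil : bset ([] : List (Bx d)) = ∅ := rfl
lemma bset_cons (p : Bx d) (l : List (Bx d)) : bset (p :: l) = box p ∪ bset l := rfl

lemma mem_bset {l : List (Bx d)} {x : Fin d → ℝ} : x ∈ bset l ↔ ∃ p ∈ l, x ∈ box p := by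
  induction l with
  | nil => simp [bset_nil]
  | cons p t ih => simp [bset_cons, ih]

lemma box_subset_bset {l : List (Bx d)} {p : Bx d} (h : p ∈ l) : box p ⊆ bset l :=
  fun x hx => mem_bset.2 ⟨p, h, hx⟩

lemma bset_measurable (l : List (Bx d)) : MeasurableSet (bset l) := by
  induction l with
  | nil => exact MeasurableSet.empty
  | cons p t ih => exact (MeasurableSet.univ_pi fun i => measurableSet_Ico).union ih

lemma vol_bset_le (l : List (Bx d)) : volume (bset l) ≤ (l.map (fun p => volume (box p))).sum := by
  induction l with
  | nil => simp [bset_nil]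
  | cons p t ih =>
    rw [bset_cons, List.map_cons, List.sum_cons]
    exact (measure_union_le _ _).trans (add_le_add le_rfl ih)

lemma vol_bset_lt_top (l : List (Bx d)) : volume (bset l) < ⊤ := by
  refine (vol_bset_le l).trans_lt ?_
  induction l with
  | nil => simp
  | cons p t ih =>
    rw [List.map_cons, List.sum_cons]
    refine ENNReal.add_lt_top.2 ⟨?_, ih⟩
    rw [show volume (box p) = ∏ i, ENNReal.ofReal (p.2 i - p.1 i) by
      rw [box, volume_pi_pi]; simp [Real.volume_Ico]]
    exact ENNReal.prod_lt_top fun i _ => ENNReal.ofReal_lt_top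

-- pairwise-disjoint exact volume
lemma vol_bset_eq_sum {l : List (Bx d)} (h : l.Pairwise fun p q => Disjoint (box p) (box q)) :
    volume (bset l) = (l.map (fun p => volume (box p))).sum := by
  induction l with
  | nil => simp [bset_nil]
  | cons p t ih =>
    rw [bset_cons, List.map_cons, List.sum_cons]
    have hd : Disjoint (box p) (bset t) := by
      rw [Set.disjoint_right]
      intro x hx hxp
      obtain ⟨q, hq, hxq⟩ := mem_bset.1 hx
      exact Set.disjoint_left.1 ((List.pairwise_cons.1 h).1 q hq) hxp hxq
    rw [measure_union hd (bset_measurable t), ih (List.pairwise_cons.1 h).2]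

-- cutting
def cutB (i : Fin d) (t : ℝ) (p : Bx d) : Bx d := (p.1, Function.update p.2 i (min (p.2 i) t))
def cutA (i : Fin d) (t : ℝ) (p : Bx d) : Bx d := (Function.update p.1 i (max (p.1 i) t), p.2)

lemma box_cutB (i : Fin d) (t : ℝ) (p : Bx d) :
    box (cutB i t p) = box p ∩ {x | x i < t} := by
  ext x
  simp only [mem_box, cutB, Set.mem_inter_iff, Set.mem_setOf_eq]
  constructor
  · intro h
    have hi := h i
    rw [Function.update_self] at hi
    refine ⟨fun j => ?_, hi.2.trans_le (min_le_right _ _)⟩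
    rcases eq_or_ne j i with rfl | hj
    · exact ⟨hi.1, hi.2.trans_le (min_le_left _ _)⟩
    · have := h j; rwa [Function.update_of_ne hj] at this
  · rintro ⟨h, ht⟩ j
    rcases eq_or_ne j i with rfl | hj
    · rw [Function.update_self]; exact ⟨(h j).1, lt_min (h j).2 ht⟩
    · rw [Function.update_of_ne hj]; exact h j

lemma box_cutA (i : Fin d) (t : ℝ) (p : Bx d) :
    box (cutA i t p) = box p ∩ {x | t ≤ x i} := by
  ext x
  simp only [mem_box, cutA, Set.mem_inter_iff, Set.mem_setOf_eq]
  constructor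
  · intro h
    have hi := h i
    rw [Function.update_self] at hi
    refine ⟨fun j => ?_, (le_max_right _ _).trans hi.1⟩
    rcases eq_or_ne j i with rfl | hj
    · exact ⟨(le_max_left _ _).trans hi.1, hi.2⟩
    · have := h j; rwa [Function.update_of_ne hj] at this
  · rintro ⟨h, ht⟩ j
    rcases eq_or_ne j i with rfl | hj
    · rw [Function.update_self]; exact ⟨max_le (h j).1 ht, (h j).2⟩
    · rw [Function.update_of_ne hj]; exact h j

noncomputable def below (i : Fin d) (t : ℝ) (l : List (Bx d)) : List (Bx d) :=
  (l.map (cutB i t)).filter (fun p => decide (nd p))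
noncomputable def above (i : Fin d) (t : ℝ) (l : List (Bx d)) : List (Bx d) :=
  (l.map (cutA i t)).filter (fun p => decide (nd p))

lemma bset_filter_nd (l : List (Bx d)) : bset (l.filter (fun p => decide (nd p))) = bset l := by
  induction l with
  | nil => simp [bset_nil]
  | cons p t ih =>
    by_cases h : nd p
    · rw [List.filter_cons_of_pos (by simpa using h), bset_cons, bset_cons, ih]
    · rw [List.filter_cons_of_neg (by simpa using h), bset_cons, ih,
        box_empty_of_not_nd h, Set.empty_union]

lemma bset_below (i : Fin d) (t : ℝ) (l : List (Bx d)) :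
    bset (below i t l) = bset l ∩ {x | x i < t} := by
  rw [below, bset_filter_nd]
  induction l with
  | nil => simp [bset_nil]
  | cons p s ih =>
    rw [List.map_cons, bset_cons, bset_cons, ih, box_cutB, Set.union_inter_distrib_right]

lemma bset_above (i : Fin d) (t : ℝ) (l : List (Bx d)) :
    bset (above i t l) = bset l ∩ {x | t ≤ x i} := by
  rw [above, bset_filter_nd]
  induction l with
  | nil => simp [bset_nil]
  | cons p s ih =>
    rw [List.map_cons, bset_cons, bset_cons, ih, box_cutA, Set.union_inter_distrib_right]

lemma nd_of_mem_below {i : Fin d} {t : ℝ} {l : List (Bx d)} {p : Bx d} (h : p ∈ below i t l) :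
    nd p := by simpa using (List.mem_filter.1 h).2

lemma nd_of_mem_above {i : Fin d} {t : ℝ} {l : List (Bx d)} {p : Bx d} (h : p ∈ above i t l) :
    nd p := by simpa using (List.mem_filter.1 h).2

lemma pairwise_below {i : Fin d} {t : ℝ} {l : List (Bx d)}
    (h : l.Pairwise fun p q => Disjoint (box p) (box q)) :
    (below i t l).Pairwise fun p q => Disjoint (box p) (box q) := by
  refine List.Pairwise.filter _ ?_
  rw [List.pairwise_map]
  refine h.imp ?_
  intro p q hpq
  rw [box_cutB, box_cutB]
  exact hpq.mono Set.inter_subset_left Set.inter_subset_left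

lemma pairwise_above {i : Fin d} {t : ℝ} {l : List (Bx d)}
    (h : l.Pairwise fun p q => Disjoint (box p) (box q)) :
    (above i t l).Pairwise fun p q => Disjoint (box p) (box q) := by
  refine List.Pairwise.filter _ ?_
  rw [List.pairwise_map]
  refine h.imp ?_
  intro p q hpq
  rw [box_cutA, box_cutA]
  exact hpq.mono Set.inter_subset_left Set.inter_subset_left

lemma length_below_le (i : Fin d) (t : ℝ) (l : List (Bx d)) :
    (below i t l).length ≤ l.length :=
  (List.length_filter_le _ _).trans (by rw [List.length_map])

lemma length_above_le (i : Fin d) (t : ℝ) (l : List (Bx d)) :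
    (above i t l).length ≤ l.length :=
  (List.length_filter_le _ _).trans (by rw [List.length_map])

-- strict length drop when some box dies
lemma length_filter_map_lt {α β : Type*} (f : α → β) (q : β → Bool) (l : List α) {a : α}
    (ha : a ∈ l) (hqa : ¬ q (f a)) : ((l.map f).filter q).length < l.length := by
  induction l with
  | nil => simp at ha
  | cons b t ih =>
    rw [List.map_cons]
    rcases List.mem_cons.1 ha with rfl | hat
    · rw [List.filter_cons_of_neg (by simpa using hqa)]
      simpa using Nat.lt_succ_of_le ((List.length_filter_le _ _).trans (by rw [List.length_map]))
    · by_cases hb : q (f b)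
      · rw [List.filter_cons_of_pos hb]
        simpa using Nat.succ_lt_succ (ih hat)
      · rw [List.filter_cons_of_neg (by simpa using hb)]
        exact (ih hat).trans (Nat.lt_succ_self _)

lemma length_below_lt {i : Fin d} {t : ℝ} {l : List (Bx d)} {p : Bx d}
    (hp : p ∈ l) (hpt : t ≤ p.1 i) : (below i t l).length < l.length := by
  refine length_filter_map_lt _ _ _ hp ?_
  simp only [decide_eq_true_eq]
  intro hnd
  have := hnd i
  simp only [cutB, Function.update_self] at this
  exact absurd ((min_le_right _ _).trans hpt) (not_le.2 this)

lemma length_above_lt {i : Fin d} {t : ℝ} {l : List (Bx d)} {p : Bx d}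
    (hp : p ∈ l) (hpt : p.2 i ≤ t) : (above i t l).length < l.length := by
  refine length_filter_map_lt _ _ _ hp ?_
  simp only [decide_eq_true_eq]
  intro hnd
  have := hnd i
  simp only [cutA, Function.update_self] at this
  exact absurd (hpt.trans (le_max_right _ _)) (not_le.2 this)


-- section: IVT for the cut volume
noncomputable def cutvol (l : List (Bx d)) (i : Fin d) (s : ℝ) : ℝ :=
  (volume (bset l ∩ {x | x i < s})).toReal

noncomputable def slabK (l : List (Bx d)) (i : Fin d) : ENNReal :=
  (l.map fun p => ∏ j ∈ Finset.univ.erase i, ENNReal.ofReal (p.2 j - p.1 j)).sum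

lemma slabK_lt_top (l : List (Bx d)) (i : Fin d) : slabK l i < ⊤ := by
  rw [slabK]
  induction l with
  | nil => simp
  | cons p t ih =>
    rw [List.map_cons, List.sum_cons]
    exact ENNReal.add_lt_top.2 ⟨ENNReal.prod_lt_top fun j _ => ENNReal.ofReal_lt_top, ih⟩

lemma vol_slab_le (l : List (Bx d)) (i : Fin d) {s s' : ℝ} (hss : s ≤ s') :
    volume (bset l ∩ {x | s ≤ x i ∧ x i < s'}) ≤ slabK l i * ENNReal.ofReal (s' - s) := by
  induction l with
  | nil => simp [bset_nil, slabK]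
  | cons p t ih =>
    rw [bset_cons, Set.union_inter_distrib_right]
    refine (measure_union_le _ _).trans ?_
    rw [slabK, List.map_cons, List.sum_cons, add_mul]
    refine add_le_add ?_ (ih.trans le_rfl)
    -- box p ∩ slab ⊆ box (update p.1 i s, update p.2 i s')
    have hsub : box p ∩ {x | s ≤ x i ∧ x i < s'} ⊆
        box (Function.update p.1 i s, Function.update p.2 i s') := by
      rintro x ⟨hx, hx1, hx2⟩
      rw [mem_box] at hx ⊢
      intro j
      rcases eq_or_ne j i with rfl | hj
      · simp only [Function.update_self]; exact ⟨hx1, hx2⟩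
      · simp only [Function.update_of_ne hj]; exact hx j
    refine (measure_mono hsub).trans ?_
    rw [vol_box]
    have : ∀ j : Fin d, (fun j => ENNReal.ofReal
        ((Function.update p.2 i s') j - (Function.update p.1 i s) j)) j =
        if j = i then ENNReal.ofReal (s' - s) else ENNReal.ofReal (p.2 j - p.1 j) := by
      intro j
      rcases eq_or_ne j i with rfl | hj
      · simp
      · simp only [if_neg hj, Function.update_of_ne hj]
    rw [Finset.prod_congr rfl fun j _ => this j]
    rw [← Finset.mul_prod_erase Finset.univ _ (Finset.mem_univ i)]
    rw [if_pos rfl]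
    rw [mul_comm]
    refine mul_le_mul' (le_of_eq ?_) le_rfl
    refine Finset.prod_congr rfl fun j hj => ?_
    rw [if_neg (Finset.mem_erase.1 hj).1]

lemma cutvol_split (l : List (Bx d)) (i : Fin d) {s s' : ℝ} (hss : s ≤ s') :
    volume (bset l ∩ {x | x i < s'}) =
      volume (bset l ∩ {x | x i < s}) + volume (bset l ∩ {x | s ≤ x i ∧ x i < s'}) := by
  have hm : MeasurableSet {x : Fin d → ℝ | x i < s} :=
    measurableSet_lt (measurable_pi_apply i) measurable_const
  have key := measure_inter_add_diff (μ := volume) (bset l ∩ {x | x i < s'}) hm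
  have e1 : bset l ∩ {x | x i < s'} ∩ {x | x i < s} = bset l ∩ {x | x i < s} := by
    ext x
    simp only [Set.mem_inter_iff, Set.mem_setOf_eq]
    constructor
    · rintro ⟨⟨h1, _⟩, h3⟩; exact ⟨h1, h3⟩
    · rintro ⟨h1, h3⟩; exact ⟨⟨h1, h3.trans_le hss⟩, h3⟩
  have e2 : (bset l ∩ {x | x i < s'}) \ {x | x i < s} = bset l ∩ {x | s ≤ x i ∧ x i < s'} := by
    ext x
    simp only [Set.mem_diff, Set.mem_inter_iff, Set.mem_setOf_eq, not_lt]
    tauto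
  rw [e1, e2] at key
  exact key.symm

lemma cutvol_mono (l : List (Bx d)) (i : Fin d) : Monotone (cutvol l i) := by
  intro s s' hss
  rw [cutvol, cutvol]
  refine ENNReal.toReal_mono ((measure_mono Set.inter_subset_left).trans_lt
    (vol_bset_lt_top l)).ne (measure_mono ?_)
  exact Set.inter_subset_inter (le_refl _) (fun x hx => lt_of_lt_of_le hx hss)

lemma cutvol_lipschitz (l : List (Bx d)) (i : Fin d) {s s' : ℝ} (hss : s ≤ s') :
    cutvol l i s' - cutvol l i s ≤ (slabK l i).toReal * (s' - s) := by
  have hfin : ∀ S : Set (Fin d → ℝ), volume (bset l ∩ S) ≠ ⊤ := fun S =>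
    ((measure_mono Set.inter_subset_left).trans_lt (vol_bset_lt_top l)).ne
  rw [cutvol, cutvol]
  have h1 := cutvol_split l i hss
  have h2 : (volume (bset l ∩ {x | x i < s'})).toReal =
      (volume (bset l ∩ {x | x i < s})).toReal +
      (volume (bset l ∩ {x | s ≤ x i ∧ x i < s'})).toReal := by
    rw [h1, ENNReal.toReal_add (hfin _) (hfin _)]
  rw [h2]
  have h3 := vol_slab_le l i hss
  have h4 : (volume (bset l ∩ {x | s ≤ x i ∧ x i < s'})).toReal ≤
      (slabK l i * ENNReal.ofReal (s' - s)).toReal := by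
    refine ENNReal.toReal_mono ?_ h3
    exact (ENNReal.mul_lt_top (slabK_lt_top l i) ENNReal.ofReal_lt_top).ne
  rw [ENNReal.toReal_mul, ENNReal.toReal_ofReal (by linarith)] at h4
  linarith

lemma cutvol_continuous (l : List (Bx d)) (i : Fin d) : Continuous (cutvol l i) := by
  have key : ∀ s s' : ℝ, dist (cutvol l i s) (cutvol l i s') ≤
      (slabK l i).toReal * dist s s' := by
    intro s s'
    rcases le_total s s' with h | h
    · rw [Real.dist_eq, Real.dist_eq, abs_of_nonpos (by
        have := cutvol_mono l i h; simp [cutvol] at this ⊢; linarith),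
        abs_of_nonpos (by linarith)]
      have := cutvol_lipschitz l i h
      linarith
    · rw [Real.dist_eq, Real.dist_eq, abs_of_nonneg (by
        have := cutvol_mono l i h; linarith),
        abs_of_nonneg (by linarith)]
      have := cutvol_lipschitz l i h
      linarith
  exact (LipschitzWith.of_dist_le_mul (K := (slabK l i).toNNReal) (by
    intro x y
    have := key x y
    simpa [ENNReal.toReal] using this
    )).continuous

lemma exists_lb (l : List ℝ) : ∃ m : ℝ, ∀ x ∈ l, m ≤ x := by
  induction l with
  | nil => exact ⟨0, by simp⟩
  | cons a t ih =>
    obtain ⟨m, hm⟩ := ih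
    exact ⟨min m a, by
      intro x hx
      rcases List.mem_cons.1 hx with rfl | hxt
      · exact min_le_right _ _
      · exact (min_le_left _ _).trans (hm x hxt)⟩

lemma exists_ub (l : List ℝ) : ∃ M : ℝ, ∀ x ∈ l, x ≤ M := by
  obtain ⟨m, hm⟩ := exists_lb (l.map (fun x => -x))
  exact ⟨-m, fun x hx => by
    have := hm (-x) (List.mem_map.2 ⟨x, hx, rfl⟩); linarith⟩

lemma exists_cut (l : List (Bx d)) (hl : l ≠ []) (hnd : ∀ p ∈ l, nd p) (i : Fin d)
    {v : ℝ} (hv0 : 0 ≤ v) (hv1 : v ≤ (volume (bset l)).toReal) :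
    ∃ s : ℝ, cutvol l i s = v := by
  obtain ⟨m, hm⟩ := exists_lb (l.map fun p => p.1 i)
  obtain ⟨M, hM⟩ := exists_ub (l.map fun p => p.2 i)
  have hmM : m ≤ M := by
    obtain ⟨p, hp⟩ := List.exists_mem_of_ne_nil l hl
    have h1 := hm (p.1 i) (List.mem_map.2 ⟨p, hp, rfl⟩)
    have h2 := hM (p.2 i) (List.mem_map.2 ⟨p, hp, rfl⟩)
    have := hnd p hp i
    linarith
  have hfm : cutvol l i m = 0 := by
    have hemp : bset l ∩ {x | x i < m} = ∅ := by
      ext x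
      simp only [Set.mem_inter_iff, Set.mem_setOf_eq, Set.mem_empty_iff_false, iff_false, not_and]
      intro hx
      obtain ⟨p, hp, hxp⟩ := mem_bset.1 hx
      have h1 := hm (p.1 i) (List.mem_map.2 ⟨p, hp, rfl⟩)
      have h2 := (mem_box.1 hxp i).1
      push_neg
      linarith
    rw [cutvol, hemp, measure_empty, ENNReal.toReal_zero]
  have hfM : cutvol l i M = (volume (bset l)).toReal := by
    have hful : bset l ∩ {x | x i < M} = bset l := by
      rw [Set.inter_eq_left]
      intro x hx
      obtain ⟨p, hp, hxp⟩ := mem_bset.1 hx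
      have h1 := hM (p.2 i) (List.mem_map.2 ⟨p, hp, rfl⟩)
      have h2 := (mem_box.1 hxp i).2
      simp only [Set.mem_setOf_eq]
      linarith
    rw [cutvol, hful]
  have : v ∈ Set.Icc (cutvol l i m) (cutvol l i M) := by
    rw [hfm, hfM]; exact ⟨hv0, hv1⟩
  obtain ⟨s, _, hs⟩ := intermediate_value_Icc hmM (cutvol_continuous l i).continuousOn this
  exact ⟨s, hs⟩

-- AM-GM base case
lemma amgm {d : ℕ} (hd : 0 < d) (α β : Fin d → ℝ) (hα : ∀ i, 0 < α i) (hβ : ∀ i, 0 < β i) :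
    (∏ i, α i) ^ (1/(d:ℝ)) + (∏ i, β i) ^ (1/(d:ℝ)) ≤ (∏ i, (α i + β i)) ^ (1/(d:ℝ)) := by
  have hd' : (0:ℝ) < d := Nat.cast_pos.2 hd
  have hS : ∀ i, 0 < α i + β i := fun i => add_pos (hα i) (hβ i)
  have hSpos : 0 < ∏ i, (α i + β i) := Finset.prod_pos fun i _ => hS i
  have key : ∀ γ : Fin d → ℝ, (∀ i, 0 < γ i) → (∀ i, γ i ≤ α i + β i) →
      (∏ i, γ i) ^ (1/(d:ℝ)) / (∏ i, (α i + β i)) ^ (1/(d:ℝ)) ≤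
        (1/(d:ℝ)) * ∑ i, γ i / (α i + β i) := by
    intro γ hγ hγle
    have h1 := Real.geom_mean_le_arith_mean_weighted Finset.univ (fun _ => 1/(d:ℝ))
      (fun i => γ i / (α i + β i)) (fun i _ => one_div_nonneg.2 (Nat.cast_nonneg d))
      (by rw [Finset.sum_const, Finset.card_univ, Fintype.card_fin, nsmul_eq_mul]; field_simp)
      (fun i _ => le_of_lt (div_pos (hγ i) (hS i)))
    calc (∏ i, γ i) ^ (1/(d:ℝ)) / (∏ i, (α i + β i)) ^ (1/(d:ℝ))
        = ∏ i, (γ i / (α i + β i)) ^ (1/(d:ℝ)) := by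
          rw [Real.finset_prod_rpow _ _ (fun i _ => (div_pos (hγ i) (hS i)).le) _, Finset.prod_div_distrib,
            Real.div_rpow (Finset.prod_nonneg fun i _ => (hγ i).le)
              (Finset.prod_nonneg fun i _ => (hS i).le)]
      _ ≤ ∑ i, (1/(d:ℝ)) * (γ i / (α i + β i)) := h1
      _ = (1/(d:ℝ)) * ∑ i, γ i / (α i + β i) := by rw [Finset.mul_sum]
  have hA := key α hα fun i => by linarith [hβ i]
  have hB := key β hβ fun i => by linarith [hα i]
  have hsum : (1/(d:ℝ)) * ∑ i, α i / (α i + β i) + (1/(d:ℝ)) * ∑ i, β i / (α i + β i) = 1 := by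
    rw [← mul_add, ← Finset.sum_add_distrib]
    have : ∀ i : Fin d, α i / (α i + β i) + β i / (α i + β i) = 1 := fun i => by
      rw [← add_div, div_self (hS i).ne']
    rw [Finset.sum_congr rfl fun i _ => this i]
    rw [Finset.sum_const, Finset.card_univ, Fintype.card_fin, nsmul_eq_mul, mul_one]
    field_simp
  have hc : (0:ℝ) < (∏ i, (α i + β i)) ^ (1/(d:ℝ)) := Real.rpow_pos_of_pos hSpos _
  have := add_le_add hA hB
  rw [← add_div] at this
  rw [hsum] at this
  calc (∏ i, α i) ^ (1/(d:ℝ)) + (∏ i, β i) ^ (1/(d:ℝ))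
      = ((∏ i, α i) ^ (1/(d:ℝ)) + (∏ i, β i) ^ (1/(d:ℝ))) / (∏ i, (α i + β i)) ^ (1/(d:ℝ))
        * (∏ i, (α i + β i)) ^ (1/(d:ℝ)) := by field_simp
    _ ≤ 1 * (∏ i, (α i + β i)) ^ (1/(d:ℝ)) := by
        exact mul_le_mul_of_nonneg_right this hc.le
    _ = (∏ i, (α i + β i)) ^ (1/(d:ℝ)) := one_mul _

lemma toReal_vol_box (p : Bx d) (hp : nd p) :
    (volume (box p)).toReal = ∏ i, (p.2 i - p.1 i) := by
  rw [vol_box, ENNReal.toReal_prod]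
  exact Finset.prod_congr rfl fun i _ => ENNReal.toReal_ofReal (by linarith [hp i])

lemma base_case {d : ℕ} (hd : 0 < d) (p q : Bx d) (hp : nd p) (hq : nd q) :
    ENNReal.ofReal (((volume (box p)).toReal ^ (1/(d:ℝ)) +
        (volume (box q)).toReal ^ (1/(d:ℝ))) ^ (d:ℝ)) ≤ volume (box p + box q) := by
  rw [box_add_box hp hq]
  conv_rhs => rw [vol_box]
  have hd' : (0:ℝ) < d := Nat.cast_pos.2 hd
  have hα : ∀ i, 0 < p.2 i - p.1 i := fun i => sub_pos.2 (hp i)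
  have hβ : ∀ i, 0 < q.2 i - q.1 i := fun i => sub_pos.2 (hq i)
  have hs : ∀ i, (p + q).2 i - (p + q).1 i = (p.2 i - p.1 i) + (q.2 i - q.1 i) := by
    intro i; simp [Prod.add_def]; ring
  rw [Finset.prod_congr rfl fun i (_ : i ∈ Finset.univ) => congrArg ENNReal.ofReal (hs i)]
  rw [← ENNReal.ofReal_prod_of_nonneg (fun i _ => by linarith [hα i, hβ i])]
  refine ENNReal.ofReal_le_ofReal ?_
  rw [toReal_vol_box p hp, toReal_vol_box q hq]
  have h := amgm hd (fun i => p.2 i - p.1 i) (fun i => q.2 i - q.1 i) hα hβ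
  have hR : 0 ≤ (∏ i, (p.2 i - p.1 i)) ^ (1/(d:ℝ)) + (∏ i, (q.2 i - q.1 i)) ^ (1/(d:ℝ)) :=
    add_nonneg (Real.rpow_nonneg (Finset.prod_nonneg fun i _ => (hα i).le) _)
      (Real.rpow_nonneg (Finset.prod_nonneg fun i _ => (hβ i).le) _)
  calc ((∏ i, (p.2 i - p.1 i)) ^ (1/(d:ℝ)) + (∏ i, (q.2 i - q.1 i)) ^ (1/(d:ℝ))) ^ (d:ℝ)
      ≤ (((∏ i, ((p.2 i - p.1 i) + (q.2 i - q.1 i))) ^ (1/(d:ℝ)))) ^ (d:ℝ) := by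
        exact Real.rpow_le_rpow hR h (by positivity)
    _ = ∏ i, ((p.2 i - p.1 i) + (q.2 i - q.1 i)) := by
        rw [← Real.rpow_mul (Finset.prod_nonneg fun i _ => by linarith [hα i, hβ i])]
        rw [one_div, inv_mul_cancel₀ (by exact_mod_cast hd'.ne')]
        exact Real.rpow_one _

-- separation and helper lemmas
lemma corner_mem {p : Bx d} (hp : nd p) : p.1 ∈ box p :=
  mem_box.2 fun i => ⟨le_refl _, hp i⟩

lemma sep {p q : Bx d} (hp : nd p) (hq : nd q) (hdisj : Disjoint (box p) (box q)) :
    ∃ (i : Fin d) (t : ℝ), (box p ⊆ {x | x i < t} ∧ box q ⊆ {x | t ≤ x i}) ∨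
      (box q ⊆ {x | x i < t} ∧ box p ⊆ {x | t ≤ x i}) := by
  have h : ∃ i, p.2 i ≤ q.1 i ∨ q.2 i ≤ p.1 i := by
    by_contra hc
    push_neg at hc
    have hx : (fun i => max (p.1 i) (q.1 i)) ∈ box p ∩ box q := by
      constructor
      · exact mem_box.2 fun i => ⟨le_max_left _ _, max_lt (hp i) (hc i).1⟩
      · exact mem_box.2 fun i => ⟨le_max_right _ _, max_lt (hc i).2 (hq i)⟩
    exact Set.disjoint_left.1 hdisj hx.1 hx.2
  obtain ⟨i, hi | hi⟩ := h
  · exact ⟨i, q.1 i, Or.inl ⟨fun x hx => lt_of_lt_of_le (mem_box.1 hx i).2 hi,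
      fun x hx => (mem_box.1 hx i).1⟩⟩
  · exact ⟨i, p.1 i, Or.inr ⟨fun x hx => lt_of_lt_of_le (mem_box.1 hx i).2 hi,
      fun x hx => (mem_box.1 hx i).1⟩⟩

lemma upper_from_subset {p : Bx d} (hp : nd p) {i : Fin d} {t : ℝ}
    (h : box p ⊆ {x | x i < t}) : p.2 i ≤ t := by
  by_contra hc
  push_neg at hc
  have hx : Function.update p.1 i (max (p.1 i) t) ∈ box p := by
    refine mem_box.2 fun j => ?_
    rcases eq_or_ne j i with rfl | hj
    · rw [Function.update_self]
      exact ⟨le_max_left _ _, max_lt (hp j) hc⟩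
    · rw [Function.update_of_ne hj]; exact ⟨le_refl _, hp j⟩
  have := h hx
  simp only [Set.mem_setOf_eq, Function.update_self] at this
  exact absurd this (not_lt.2 (le_max_right _ _))

lemma lower_from_subset {p : Bx d} (hp : nd p) {i : Fin d} {t : ℝ}
    (h : box p ⊆ {x | t ≤ x i}) : t ≤ p.1 i := h (corner_mem hp)

lemma ne_nil_of_vol_pos {l : List (Bx d)} (h : 0 < (volume (bset l)).toReal) : l ≠ [] := by
  intro hl
  rw [hl] at h
  simp [bset_nil] at h

lemma vol_split (l : List (Bx d)) (i : Fin d) (t : ℝ) :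
    volume (bset l) = volume (bset (below i t l)) + volume (bset (above i t l)) := by
  rw [bset_below, bset_above]
  have hm : MeasurableSet {x : Fin d → ℝ | x i < t} :=
    measurableSet_lt (measurable_pi_apply i) measurable_const
  have key := measure_inter_add_diff (μ := volume) (bset l) hm
  have e2 : bset l \ {x | x i < t} = bset l ∩ {x | t ≤ x i} := by
    ext x; simp [Set.mem_diff, not_lt]
  rw [e2] at key
  exact key.symm

lemma scale_pow {d : ℕ} (hd : 0 < d) {θ a b : ℝ} (hθ : 0 ≤ θ) (ha : 0 ≤ a) (hb : 0 ≤ b) :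
    ((θ*a)^(1/(d:ℝ)) + (θ*b)^(1/(d:ℝ)))^(d:ℝ) =
      θ * ((a^(1/(d:ℝ)) + b^(1/(d:ℝ)))^(d:ℝ)) := by
  have hd' : (0:ℝ) < d := Nat.cast_pos.2 hd
  rw [Real.mul_rpow hθ ha, Real.mul_rpow hθ hb, ← mul_add,
    Real.mul_rpow (Real.rpow_nonneg hθ _)
      (add_nonneg (Real.rpow_nonneg ha _) (Real.rpow_nonneg hb _)),
    ← Real.rpow_mul hθ, one_div, inv_mul_cancel₀ (by exact_mod_cast hd'.ne'), Real.rpow_one]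

lemma step {d : ℕ} (hd : 0 < d) (n : ℕ)
    (IH : ∀ L M : List (Bx d), L.length + M.length < n → L ≠ [] → M ≠ [] →
      (∀ p ∈ L, nd p) → (∀ p ∈ M, nd p) →
      L.Pairwise (fun p q => Disjoint (box p) (box q)) →
      M.Pairwise (fun p q => Disjoint (box p) (box q)) →
      ENNReal.ofReal (((volume (bset L)).toReal ^ (1/(d:ℝ)) +
        (volume (bset M)).toReal ^ (1/(d:ℝ))) ^ (d:ℝ)) ≤ volume (bset L + bset M))
    (L M : List (Bx d)) (hlen : L.length + M.length ≤ n) (h2 : 2 ≤ L.length)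
    (hM : M ≠ []) (hndL : ∀ p ∈ L, nd p) (hndM : ∀ p ∈ M, nd p)
    (hpwL : L.Pairwise (fun p q => Disjoint (box p) (box q)))
    (hpwM : M.Pairwise (fun p q => Disjoint (box p) (box q))) :
    ENNReal.ofReal (((volume (bset L)).toReal ^ (1/(d:ℝ)) +
      (volume (bset M)).toReal ^ (1/(d:ℝ))) ^ (d:ℝ)) ≤ volume (bset L + bset M) := by
  have hd' : (0:ℝ) < d := Nat.cast_pos.2 hd
  -- two disjoint boxes in L
  obtain ⟨i, t, p₁, hp₁L, p₂, hp₂L, hsub1, hsub2⟩ :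
      ∃ (i : Fin d) (t : ℝ) (p₁ : Bx d), p₁ ∈ L ∧ ∃ p₂, p₂ ∈ L ∧
        box p₁ ⊆ {x | x i < t} ∧ box p₂ ⊆ {x | t ≤ x i} := by
    match L, h2 with
    | p :: q :: rest, _ =>
      have hpq : Disjoint (box p) (box q) :=
        (List.pairwise_cons.1 hpwL).1 q (List.mem_cons_self)
      have hp := hndL p (List.mem_cons_self)
      have hq := hndL q (List.mem_cons.2 (Or.inr (List.mem_cons_self)))
      obtain ⟨i, t, h | h⟩ := sep hp hq hpq
      · exact ⟨i, t, p, List.mem_cons_self,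
          q, List.mem_cons.2 (Or.inr (List.mem_cons_self)), h.1, h.2⟩
      · exact ⟨i, t, q, List.mem_cons.2 (Or.inr (List.mem_cons_self)),
          p, List.mem_cons_self, h.1, h.2⟩
  -- abbreviations
  set Lb := below i t L with hLb
  set La := above i t L with hLa
  set a := (volume (bset L)).toReal with hadef
  set b := (volume (bset M)).toReal with hbdef
  set ab := (volume (bset Lb)).toReal with habdef
  set aa := (volume (bset La)).toReal with haadef
  have hsplitL : volume (bset L) = volume (bset Lb) + volume (bset La) := vol_split L i t
  have hfinL := vol_bset_lt_top L
  have hfinLb := vol_bset_lt_top Lb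
  have hfinLa := vol_bset_lt_top La
  have hfinM := vol_bset_lt_top M
  have haab : a = ab + aa := by
    rw [hadef, hsplitL, ENNReal.toReal_add hfinLb.ne hfinLa.ne]
  have hab_pos : 0 < ab := by
    rw [habdef]
    refine ENNReal.toReal_pos ?_ hfinLb.ne
    refine (lt_of_lt_of_le (vol_box_pos (hndL p₁ hp₁L)) (measure_mono ?_)).ne'
    rw [hLb, bset_below]
    exact Set.subset_inter (box_subset_bset hp₁L) hsub1
  have haa_pos : 0 < aa := by
    rw [haadef]
    refine ENNReal.toReal_pos ?_ hfinLa.ne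
    refine (lt_of_lt_of_le (vol_box_pos (hndL p₂ hp₂L)) (measure_mono ?_)).ne'
    rw [hLa, bset_above]
    exact Set.subset_inter (box_subset_bset hp₂L) hsub2
  have ha_pos : 0 < a := by rw [haab]; linarith
  have hb_pos : 0 < b := by
    obtain ⟨q', hq'⟩ := List.exists_mem_of_ne_nil M hM
    rw [hbdef]
    exact ENNReal.toReal_pos
      ((lt_of_lt_of_le (vol_box_pos (hndM q' hq')) (measure_mono (box_subset_bset hq'))).ne')
      hfinM.ne
  set θ := ab / a with hθdef
  have hθ_pos : 0 < θ := div_pos hab_pos ha_pos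
  have hθ_lt : θ < 1 := by
    rw [hθdef, div_lt_one ha_pos]; linarith
  -- cut M
  obtain ⟨s, hs⟩ := exists_cut M hM hndM i (v := θ * b)
    (by positivity) (by nlinarith)
  set Mb := below i s M with hMb
  set Ma := above i s M with hMa
  have hvolMb : (volume (bset Mb)).toReal = θ * b := by
    rw [hMb, bset_below, ← hs, cutvol]
  have hsplitM : volume (bset M) = volume (bset Mb) + volume (bset Ma) := vol_split M i s
  have hfinMb := vol_bset_lt_top Mb
  have hfinMa := vol_bset_lt_top Ma
  have hvolMa : (volume (bset Ma)).toReal = b - θ * b := by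
    have : b = (volume (bset Mb)).toReal + (volume (bset Ma)).toReal := by
      rw [hbdef, hsplitM, ENNReal.toReal_add hfinMb.ne hfinMa.ne]
    rw [hvolMb] at this
    linarith
  -- nonemptiness
  have hLb_ne : Lb ≠ [] := ne_nil_of_vol_pos (by rw [← habdef]; exact hab_pos)
  have hLa_ne : La ≠ [] := ne_nil_of_vol_pos (by rw [← haadef]; exact haa_pos)
  have hMb_ne : Mb ≠ [] := ne_nil_of_vol_pos (by rw [hvolMb]; positivity)
  have hMa_ne : Ma ≠ [] := ne_nil_of_vol_pos (by rw [hvolMa]; nlinarith)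
  -- lengths
  have hlenLb : Lb.length < L.length :=
    length_below_lt hp₂L (lower_from_subset (hndL p₂ hp₂L) hsub2)
  have hlenLa : La.length < L.length :=
    length_above_lt hp₁L (upper_from_subset (hndL p₁ hp₁L) hsub1)
  have hlenMb : Mb.length ≤ M.length := length_below_le i s M
  have hlenMa : Ma.length ≤ M.length := length_above_le i s M
  -- induction hypotheses
  have IH1 := IH Lb Mb (by omega) hLb_ne hMb_ne
    (fun p hp => nd_of_mem_below hp) (fun p hp => nd_of_mem_below hp)
    (pairwise_below hpwL) (pairwise_below hpwM)
  have IH2 := IH La Ma (by omega) hLa_ne hMa_ne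
    (fun p hp => nd_of_mem_above hp) (fun p hp => nd_of_mem_above hp)
    (pairwise_above hpwL) (pairwise_above hpwM)
  rw [hvolMb] at IH1
  rw [hvolMa] at IH2
  -- sum splitting
  have hm : MeasurableSet {x : Fin d → ℝ | x i < t + s} :=
    measurableSet_lt (measurable_pi_apply i) measurable_const
  have hkey := measure_inter_add_diff (μ := volume) (bset L + bset M) hm
  have hsub_b : bset Lb + bset Mb ⊆ (bset L + bset M) ∩ {x | x i < t + s} := by
    rintro x ⟨y, hy, z, hz, rfl⟩
    rw [hLb, bset_below] at hy
    rw [hMb, bset_below] at hz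
    exact ⟨Set.add_mem_add hy.1 hz.1, by
      have h1 := hy.2
      have h2 := hz.2
      simp only [Set.mem_setOf_eq] at h1 h2 ⊢
      have : (y + z) i = y i + z i := rfl
      rw [this]
      linarith⟩
  have hsub_a : bset La + bset Ma ⊆ (bset L + bset M) \ {x | x i < t + s} := by
    rintro x ⟨y, hy, z, hz, rfl⟩
    rw [hLa, bset_above] at hy
    rw [hMa, bset_above] at hz
    refine ⟨Set.add_mem_add hy.1 hz.1, ?_⟩
    have h1 := hy.2
    have h2 := hz.2
    simp only [Set.mem_setOf_eq] at h1 h2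
    intro hcon
    simp only [Set.mem_setOf_eq] at hcon
    have he : (y + z) i = y i + z i := rfl
    rw [he] at hcon
    linarith
  have hge : volume (bset Lb + bset Mb) + volume (bset La + bset Ma) ≤
      volume (bset L + bset M) := by
    rw [← hkey]
    exact add_le_add (measure_mono hsub_b) (measure_mono hsub_a)
  -- algebra
  have hab_eq : ab = θ * a := by
    rw [hθdef]; field_simp
  have haa_eq : aa = (1 - θ) * a := by
    rw [hθdef]; field_simp; linarith
  have hX : (ab ^ (1/(d:ℝ)) + (θ*b) ^ (1/(d:ℝ))) ^ (d:ℝ) =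
      θ * ((a ^ (1/(d:ℝ)) + b ^ (1/(d:ℝ))) ^ (d:ℝ)) := by
    rw [hab_eq]
    exact scale_pow hd hθ_pos.le ha_pos.le hb_pos.le
  have hY : (aa ^ (1/(d:ℝ)) + (b - θ*b) ^ (1/(d:ℝ))) ^ (d:ℝ) =
      (1 - θ) * ((a ^ (1/(d:ℝ)) + b ^ (1/(d:ℝ))) ^ (d:ℝ)) := by
    rw [haa_eq, show b - θ*b = (1-θ)*b by ring]
    exact scale_pow hd (by linarith) ha_pos.le hb_pos.le
  calc ENNReal.ofReal ((a ^ (1/(d:ℝ)) + b ^ (1/(d:ℝ))) ^ (d:ℝ))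
      = ENNReal.ofReal (θ * ((a ^ (1/(d:ℝ)) + b ^ (1/(d:ℝ))) ^ (d:ℝ)) +
          (1 - θ) * ((a ^ (1/(d:ℝ)) + b ^ (1/(d:ℝ))) ^ (d:ℝ))) := by ring_nf
    _ = ENNReal.ofReal (θ * ((a ^ (1/(d:ℝ)) + b ^ (1/(d:ℝ))) ^ (d:ℝ))) +
        ENNReal.ofReal ((1 - θ) * ((a ^ (1/(d:ℝ)) + b ^ (1/(d:ℝ))) ^ (d:ℝ))) := by
        rw [← ENNReal.ofReal_add (by positivity) (by
          have : (0:ℝ) ≤ 1 - θ := by linarith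
          positivity)]
    _ ≤ volume (bset Lb + bset Mb) + volume (bset La + bset Ma) := by
        rw [← hX, ← hY]
        exact add_le_add IH1 IH2
    _ ≤ volume (bset L + bset M) := hge

theorem contBM {d : ℕ} (hd : 0 < d) :
    ∀ (n : ℕ) (L M : List (Bx d)), L.length + M.length ≤ n → L ≠ [] → M ≠ [] →
      (∀ p ∈ L, nd p) → (∀ p ∈ M, nd p) →
      L.Pairwise (fun p q => Disjoint (box p) (box q)) →
      M.Pairwise (fun p q => Disjoint (box p) (box q)) →
      ENNReal.ofReal (((volume (bset L)).toReal ^ (1/(d:ℝ)) +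
        (volume (bset M)).toReal ^ (1/(d:ℝ))) ^ (d:ℝ)) ≤ volume (bset L + bset M) := by
  intro n
  induction n using Nat.strong_induction_on with
  | _ n IHn =>
    intro L M hlen hL hM hndL hndM hpwL hpwM
    have IH' : ∀ L M : List (Bx d), L.length + M.length < n → L ≠ [] → M ≠ [] →
        (∀ p ∈ L, nd p) → (∀ p ∈ M, nd p) →
        L.Pairwise (fun p q => Disjoint (box p) (box q)) →
        M.Pairwise (fun p q => Disjoint (box p) (box q)) →
        ENNReal.ofReal (((volume (bset L)).toReal ^ (1/(d:ℝ)) +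
          (volume (bset M)).toReal ^ (1/(d:ℝ))) ^ (d:ℝ)) ≤ volume (bset L + bset M) :=
      fun L M h => IHn _ h L M le_rfl
    by_cases hL2 : 2 ≤ L.length
    · exact step hd n IH' L M hlen hL2 hM hndL hndM hpwL hpwM
    · by_cases hM2 : 2 ≤ M.length
      · have := step hd n IH' M L (by omega) hM2 hL hndM hndL hpwM hpwL
        rw [add_comm (bset M) (bset L)] at this
        rw [add_comm ((volume (bset L)).toReal ^ (1/(d:ℝ)))]
        exact this
      · -- both singletons
        have hL1 : L.length = 1 := by
          have := List.length_pos_iff.2 hL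
          omega
        have hM1 : M.length = 1 := by
          have := List.length_pos_iff.2 hM
          omega
        obtain ⟨p, rfl⟩ := List.length_eq_one_iff.1 hL1
        obtain ⟨q, rfl⟩ := List.length_eq_one_iff.1 hM1
        have hsetL : bset [p] = box p := by rw [bset_cons, bset_nil, Set.union_empty]
        have hsetM : bset [q] = box q := by rw [bset_cons, bset_nil, Set.union_empty]
        rw [hsetL, hsetM]
        exact base_case hd p q (hndL p (List.mem_cons_self))
          (hndM q (List.mem_cons_self))

-- discretization
def cube (a : Fin d → ℤ) : Bx d := (fun i => (a i : ℝ), fun i => (a i : ℝ) + 1)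

lemma nd_cube (a : Fin d → ℤ) : nd (cube a) := fun i => by simp [cube]

lemma vol_cube (a : Fin d → ℤ) : volume (box (cube a)) = 1 := by
  rw [vol_box]
  simp [cube]

lemma cube_disjoint {a b : Fin d → ℤ} (hab : a ≠ b) :
    Disjoint (box (cube a)) (box (cube b)) := by
  obtain ⟨i, hi⟩ : ∃ i, a i ≠ b i := by
    by_contra h
    push_neg at h
    exact hab (funext h)
  rw [Set.disjoint_left]
  intro x hxa hxb
  have h1 := mem_box.1 hxa i
  have h2 := mem_box.1 hxb i
  simp only [cube] at h1 h2
  refine hi ?_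
  have e1 : (a i : ℝ) < (b i : ℝ) + 1 := lt_of_le_of_lt h1.1 h2.2
  have e2 : (b i : ℝ) < (a i : ℝ) + 1 := lt_of_le_of_lt h2.1 h1.2
  have e1' : a i < b i + 1 := by exact_mod_cast e1
  have e2' : b i < a i + 1 := by exact_mod_cast e2
  omega

lemma cube_list_pw (A : Finset (Fin d → ℤ)) :
    (A.toList.map cube).Pairwise fun p q => Disjoint (box p) (box q) := by
  rw [List.pairwise_map]
  exact (Finset.nodup_toList A).imp fun hab => cube_disjoint hab

lemma cube_list_vol (A : Finset (Fin d → ℤ)) :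
    volume (bset (A.toList.map cube)) = (A.card : ENNReal) := by
  rw [vol_bset_eq_sum (cube_list_pw A), List.map_map]
  have : (fun p => volume (box p)) ∘ cube = fun _ : Fin d → ℤ => (1 : ENNReal) := by
    funext a
    exact vol_cube a
  rw [this, List.map_const', List.sum_replicate, Finset.length_toList, nsmul_eq_mul, mul_one]

lemma bset_cube_subset (A B : Finset (Fin d → ℤ)) :
    bset (A.toList.map cube) + bset (B.toList.map cube) ⊆
      ⋃ c ∈ (A + B + Fintype.piFinset (fun _ : Fin d => ({0, 1} : Finset ℤ))),
        box (cube c) := by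
  rintro x ⟨y, hy, z, hz, rfl⟩
  obtain ⟨p, hp, hyp⟩ := mem_bset.1 hy
  obtain ⟨q, hq, hzq⟩ := mem_bset.1 hz
  obtain ⟨a, ha, rfl⟩ := List.mem_map.1 hp
  obtain ⟨b, hb, rfl⟩ := List.mem_map.1 hq
  rw [Finset.mem_toList] at ha hb
  set ε : Fin d → ℤ := fun i => if (y i + z i) < (a i : ℝ) + (b i : ℝ) + 1 then 0 else 1 with hε
  have hεmem : ε ∈ Fintype.piFinset (fun _ : Fin d => ({0, 1} : Finset ℤ)) := by
    rw [Fintype.mem_piFinset]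
    intro i
    rw [hε]
    by_cases h : (y i + z i) < (a i : ℝ) + (b i : ℝ) + 1 <;> simp [h]
  have hc : a + b + ε ∈ A + B + Fintype.piFinset (fun _ : Fin d => ({0, 1} : Finset ℤ)) :=
    Finset.add_mem_add (Finset.add_mem_add ha hb) hεmem
  refine Set.mem_biUnion hc ?_
  rw [mem_box]
  intro i
  have h1 := mem_box.1 hyp i
  have h2 := mem_box.1 hzq i
  simp only [cube] at h1 h2
  have hadd : (y + z) i = y i + z i := rfl
  simp only [cube, Pi.add_apply, hadd]
  push_cast
  rw [hε]
  by_cases h : (y i + z i) < (a i : ℝ) + (b i : ℝ) + 1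
  · simp only [if_pos h]
    push_cast
    constructor
    · linarith [h1.1, h2.1]
    · linarith
  · simp only [if_neg h]
    push_neg at h
    push_cast
    constructor
    · linarith
    · linarith [h1.2, h2.2]

lemma vol_sum_le_card (A B : Finset (Fin d → ℤ)) :
    volume (bset (A.toList.map cube) + bset (B.toList.map cube)) ≤
      (((A + B + Fintype.piFinset (fun _ : Fin d => ({0, 1} : Finset ℤ))).card : ENNReal)) := by
  refine (measure_mono (bset_cube_subset A B)).trans ?_
  refine (measure_biUnion_finset_le _ _).trans ?_
  rw [Finset.sum_congr rfl fun c _ => vol_cube c, Finset.sum_const, nsmul_eq_mul, mul_one]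

end BMaux

open Pointwise

theorem discrete_bm_with_cube (d : ℕ) (hd : 1 ≤ d) (A B : Finset (Fin d → ℤ))
    (hA : A.Nonempty) (hB : B.Nonempty) :
    ((A + B + Fintype.piFinset (fun _ : Fin d => ({0, 1} : Finset ℤ))).card : ℝ) ^ ((1 : ℝ) / d)
      ≥ (A.card : ℝ) ^ ((1 : ℝ) / d) + (B.card : ℝ) ^ ((1 : ℝ) / d) := by
  classical
  have hd0 : 0 < d := hd
  have hd' : (0:ℝ) < d := Nat.cast_pos.2 hd0
  set LA := A.toList.map BMaux.cube with hLA
  set LB := B.toList.map BMaux.cube with hLB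
  have hLAne : LA ≠ [] := by
    intro h
    rw [hLA, List.map_eq_nil_iff, Finset.toList_eq_nil] at h
    exact hA.ne_empty h
  have hLBne : LB ≠ [] := by
    intro h
    rw [hLB, List.map_eq_nil_iff, Finset.toList_eq_nil] at h
    exact hB.ne_empty h
  have hndA : ∀ p ∈ LA, BMaux.nd p := by
    intro p hp
    obtain ⟨a, _, rfl⟩ := List.mem_map.1 hp
    exact BMaux.nd_cube a
  have hndB : ∀ p ∈ LB, BMaux.nd p := by
    intro p hp
    obtain ⟨a, _, rfl⟩ := List.mem_map.1 hp
    exact BMaux.nd_cube a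
  have hmain := BMaux.contBM hd0 (LA.length + LB.length) LA LB le_rfl hLAne hLBne
    hndA hndB (BMaux.cube_list_pw A) (BMaux.cube_list_pw B)
  have hub := BMaux.vol_sum_le_card A B
  rw [← hLA, ← hLB] at hub
  have hcomb := hmain.trans hub
  rw [hLA, hLB, BMaux.cube_list_vol A, BMaux.cube_list_vol B] at hmain hcomb
  rw [ENNReal.toReal_natCast, ENNReal.toReal_natCast] at hcomb
  set N := (A + B + Fintype.piFinset (fun _ : Fin d => ({0, 1} : Finset ℤ))).card with hN
  set R := (A.card : ℝ) ^ ((1:ℝ)/d) + (B.card : ℝ) ^ ((1:ℝ)/d) with hR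
  have hRnn : 0 ≤ R := by
    rw [hR]
    exact add_nonneg (Real.rpow_nonneg (Nat.cast_nonneg _) _)
      (Real.rpow_nonneg (Nat.cast_nonneg _) _)
  have hkey : R ^ (d:ℝ) ≤ (N:ℝ) := by
    have := (ENNReal.ofReal_le_iff_le_toReal (by
      exact ENNReal.natCast_ne_top N)).1 hcomb
    rwa [ENNReal.toReal_natCast] at this
  have hfin : (R ^ (d:ℝ)) ^ ((1:ℝ)/d) ≤ (N:ℝ) ^ ((1:ℝ)/d) :=
    Real.rpow_le_rpow (Real.rpow_nonneg hRnn _) hkey (by positivity)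
  have hRid : (R ^ (d:ℝ)) ^ ((1:ℝ)/d) = R := by
    rw [← Real.rpow_mul hRnn, mul_one_div, div_self hd'.ne', Real.rpow_one]
  rw [hRid] at hfin
  exact hfin
end

section
/- Discrete Prékopa-type superadditivity: let d ≥ 1 and let f, g, h : ℤ → ℝ≥0 be finitely supported with Σf > 0 and Σg > 0, such that for all x, y ∈ ℤ with f(x) > 0 and g(y) > 0 we have h(x+y)^{1/d} ≥ f(x)^{1/d} + g(y)^{1/d}. Then (Σ h)^{1/d} ≥ (Σ f)^{1/d} + (Σ g)^{1/d}, where Σ denotes the sum over all integers. -/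
open Pointwise

open MeasureTheory in
private lemma key_int (d : ℕ) (hd : 1 ≤ d) {c M : ℝ} (hc : 0 ≤ c) (hM : 0 ≤ M) :
    ∫ r in (0:ℝ)..M, (if r < c then r ^ (d - 1) else 0) = (min c M) ^ d / d := by
  have hind : (fun r : ℝ => if r < c then r ^ (d - 1) else 0)
      = Set.indicator (Set.Iio c) (fun r => r ^ (d - 1)) := by
    funext r; simp [Set.indicator_apply, Set.mem_Iio]
  have hset : Set.Ioo (0:ℝ) M ∩ Set.Iio c = Set.Ioo 0 (min c M) := by
    ext r
    simp only [Set.mem_inter_iff, Set.mem_Ioo, Set.mem_Iio, lt_min_iff]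
    tauto
  have hmin : (0:ℝ) ≤ min c M := le_min hc hM
  rw [hind, intervalIntegral.integral_of_le hM, integral_Ioc_eq_integral_Ioo,
    setIntegral_indicator measurableSet_Iio, hset, ← integral_Ioc_eq_integral_Ioo,
    ← intervalIntegral.integral_of_le hmin, integral_pow]
  rw [Nat.sub_add_cancel hd, zero_pow (by omega : d ≠ 0), sub_zero,
    show ((d-1 : ℕ) : ℝ) + 1 = ((d-1+1 : ℕ) : ℝ) by push_cast; ring, Nat.sub_add_cancel hd]

open MeasureTheory in
private lemma pow_int (d : ℕ) (hd : 1 ≤ d) {M : ℝ} :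
    ∫ r in (0:ℝ)..M, r ^ (d - 1) = M ^ d / d := by
  rw [integral_pow]
  rw [Nat.sub_add_cancel hd, zero_pow (by omega : d ≠ 0), sub_zero,
    show ((d-1 : ℕ) : ℝ) + 1 = ((d-1+1 : ℕ) : ℝ) by push_cast; ring, Nat.sub_add_cancel hd]

private lemma alg_step (d : ℕ) {a b p q : ℝ} (ha : 0 < a) (hb : 0 < b)
    (hpa : a ≤ p) (hqb : b ≤ q) :
    (p + q) ^ d ≤ p ^ d / (a / (a + b)) ^ d + q ^ d / (b / (a + b)) ^ d - (a + b) ^ d := by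
  set M : ℝ := a + b with hMdef
  have hM : 0 < M := by positivity
  set lam : ℝ := a / M with hlam
  set mu : ℝ := b / M with hmu
  have hlam0 : 0 < lam := by positivity
  have hmu0 : 0 < mu := by positivity
  have hp0 : 0 < p := lt_of_lt_of_le ha hpa
  have hq0 : 0 < q := lt_of_lt_of_le hb hqb
  have hsum : lam + mu = 1 := by rw [hlam, hmu, ← add_div, ← hMdef, div_self hM.ne']
  have hPL : M ≤ p / lam := by
    rw [le_div_iff₀ hlam0, hlam]
    calc M * (a / M) = a := by field_simp
    _ ≤ p := hpa
  have hQM : M ≤ q / mu := by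
    rw [le_div_iff₀ hmu0, hmu]
    calc M * (b / M) = b := by field_simp
    _ ≤ q := hqb
  have hconv := (convexOn_pow (𝕜 := ℝ) d).2
    (Set.mem_Ici.2 (le_of_lt (div_pos hp0 hlam0)))
    (Set.mem_Ici.2 (le_of_lt (div_pos hq0 hmu0))) hlam0.le hmu0.le hsum
  simp only [smul_eq_mul] at hconv
  have heq : lam * (p / lam) + mu * (q / mu) = p + q := by
    field_simp
  rw [heq] at hconv
  have hP : M ^ d ≤ (p / lam) ^ d := pow_le_pow_left₀ hM.le hPL d
  have hQ : M ^ d ≤ (q / mu) ^ d := pow_le_pow_left₀ hM.le hQM d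
  have e1 : p ^ d / lam ^ d = (p / lam) ^ d := (div_pow p lam d).symm
  have e2 : q ^ d / mu ^ d = (q / mu) ^ d := (div_pow q mu d).symm
  rw [e1, e2]
  set X := (p / lam) ^ d
  set Y := (q / mu) ^ d
  have h1 : mu * M ^ d ≤ mu * X := mul_le_mul_of_nonneg_left hP hmu0.le
  have h2 : lam * M ^ d ≤ lam * Y := mul_le_mul_of_nonneg_left hQ hlam0.le
  have h3 : lam * X + mu * X = X := by rw [← add_mul, hsum, one_mul]
  have h4 : lam * Y + mu * Y = Y := by rw [← add_mul, hsum, one_mul]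
  have h5 : lam * M ^ d + mu * M ^ d = M ^ d := by rw [← add_mul, hsum, one_mul]
  linarith

open MeasureTheory

theorem discrete_prekopa (d : ℕ) (hd : 1 ≤ d) (f g h : ℤ → ℝ)
    (hf0 : ∀ x, 0 ≤ f x) (hg0 : ∀ x, 0 ≤ g x) (hh0 : ∀ x, 0 ≤ h x)
    (hfs : (Function.support f).Finite) (hgs : (Function.support g).Finite)
    (hhs : (Function.support h).Finite)
    (hfpos : 0 < ∑ᶠ x, f x) (hgpos : 0 < ∑ᶠ x, g x)
    (hsup : ∀ x y : ℤ, 0 < f x → 0 < g y →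
      h (x + y) ^ ((1 : ℝ) / d) ≥ f x ^ ((1 : ℝ) / d) + g y ^ ((1 : ℝ) / d)) :
    (∑ᶠ x, h x) ^ ((1 : ℝ) / d) ≥ (∑ᶠ x, f x) ^ ((1 : ℝ) / d) + (∑ᶠ x, g x) ^ ((1 : ℝ) / d) := by
  classical
  have hdne : d ≠ 0 := by omega
  have hdR : (0:ℝ) < (d:ℝ) := by exact_mod_cast Nat.pos_of_ne_zero hdne
  have hene : (1:ℝ)/(d:ℝ) ≠ 0 := by positivity
  have he0 : (0:ℝ) ≤ (1:ℝ)/(d:ℝ) := by positivity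
  -- rpow/pow inverse lemmas
  have hrd : ∀ x : ℝ, 0 ≤ x → (x ^ ((1:ℝ)/d)) ^ d = x := by
    intro x hx; rw [one_div]; exact Real.rpow_inv_natCast_pow hx hdne
  have hrd' : ∀ x : ℝ, 0 ≤ x → (x ^ d) ^ ((1:ℝ)/d) = x := by
    intro x hx; rw [one_div]; exact Real.pow_rpow_inv_natCast hx hdne
  rw [finsum_eq_sum f hfs] at hfpos ⊢
  rw [finsum_eq_sum g hgs] at hgpos ⊢
  rw [finsum_eq_sum h hhs]
  set Sf := hfs.toFinset with hSf
  set Sg := hgs.toFinset with hSg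
  set Sh := hhs.toFinset with hSh
  set F := ∑ x ∈ Sf, f x with hF
  set G := ∑ x ∈ Sg, g x with hG
  set H := ∑ x ∈ Sh, h x with hH
  have hF0 : 0 ≤ F := Finset.sum_nonneg fun i _ => hf0 i
  have hG0 : 0 ≤ G := Finset.sum_nonneg fun i _ => hg0 i
  have hH0 : 0 ≤ H := Finset.sum_nonneg fun i _ => hh0 i
  -- maximizers
  have hSfne : Sf.Nonempty := by
    rcases Finset.eq_empty_or_nonempty Sf with h' | h'
    · rw [hF, h', Finset.sum_empty] at hfpos; exact absurd hfpos (lt_irrefl 0)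
    · exact h'
  have hSgne : Sg.Nonempty := by
    rcases Finset.eq_empty_or_nonempty Sg with h' | h'
    · rw [hG, h', Finset.sum_empty] at hgpos; exact absurd hgpos (lt_irrefl 0)
    · exact h'
  obtain ⟨x0, hx0S, hx0max⟩ := Sf.exists_max_image f hSfne
  obtain ⟨y0, hy0S, hy0max⟩ := Sg.exists_max_image g hSgne
  have hfx0 : 0 < f x0 :=
    (hf0 x0).lt_of_ne' (by simpa [hSf, Function.mem_support] using hfs.mem_toFinset.1 hx0S)
  have hgy0 : 0 < g y0 :=
    (hg0 y0).lt_of_ne' (by simpa [hSg, Function.mem_support] using hgs.mem_toFinset.1 hy0S)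
  set a := f x0 ^ ((1:ℝ)/d) with hadef
  set b := g y0 ^ ((1:ℝ)/d) with hbdef
  have ha : 0 < a := Real.rpow_pos_of_pos hfx0 _
  have hb : 0 < b := Real.rpow_pos_of_pos hgy0 _
  have hfa : ∀ x, f x ^ ((1:ℝ)/d) ≤ a := by
    intro x
    by_cases hx : x ∈ Sf
    · exact Real.rpow_le_rpow (hf0 x) (hx0max x hx) he0
    · have hx' : f x = 0 := by
        by_contra hne
        exact hx (hfs.mem_toFinset.2 hne)
      rw [hx', Real.zero_rpow hene]; exact ha.le
  have hgb : ∀ x, g x ^ ((1:ℝ)/d) ≤ b := by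
    intro x
    by_cases hx : x ∈ Sg
    · exact Real.rpow_le_rpow (hg0 x) (hy0max x hx) he0
    · have hx' : g x = 0 := by
        by_contra hne
        exact hx (hgs.mem_toFinset.2 hne)
      rw [hx', Real.zero_rpow hene]; exact hb.le
  have haF : a ^ d ≤ F := by
    rw [hadef, hrd _ (hf0 x0)]
    exact Finset.single_le_sum (fun i _ => hf0 i) hx0S
  have hbG : b ^ d ≤ G := by
    rw [hbdef, hrd _ (hg0 y0)]
    exact Finset.single_le_sum (fun i _ => hg0 i) hy0S
  set M : ℝ := a + b with hMdef
  have hM : 0 < M := by positivity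
  set lam : ℝ := a / M with hlamdef
  set mu : ℝ := b / M with hmudef
  have hlam0 : 0 < lam := by positivity
  have hmu0 : 0 < mu := by positivity
  have hsum1 : lam + mu = 1 := by rw [hlamdef, hmudef, ← add_div, ← hMdef, div_self hM.ne']
  have hlamM : lam * M = a := by rw [hlamdef]; field_simp
  have hmuM : mu * M = b := by rw [hmudef]; field_simp
  -- the cardinality (Cauchy-Davenport) step
  have hcard : ∀ r ∈ Set.Icc (0:ℝ) M,
      ((Sf.filter fun x => lam * r < f x ^ ((1:ℝ)/d)).card : ℝ)
      + ((Sg.filter fun x => mu * r < g x ^ ((1:ℝ)/d)).card : ℝ)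
      ≤ ((Sh.filter fun x => r < h x ^ ((1:ℝ)/d)).card : ℝ) + 1 := by
    rintro r ⟨hr0, hrM⟩
    rcases eq_or_lt_of_le hrM with heq | hrM
    · -- r = M : both filters are empty
      have h1 : (Sf.filter fun x => lam * r < f x ^ ((1:ℝ)/d)) = ∅ :=
        Finset.filter_false_of_mem fun x _ => by
          rw [heq, hlamM]; exact not_lt.2 (hfa x)
      have h2 : (Sg.filter fun x => mu * r < g x ^ ((1:ℝ)/d)) = ∅ :=
        Finset.filter_false_of_mem fun x _ => by
          rw [heq, hmuM]; exact not_lt.2 (hgb x)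
      rw [h1, h2]
      simp only [Finset.card_empty, Nat.cast_zero, add_zero, zero_add]
      positivity
    · set A := Sf.filter fun x => lam * r < f x ^ ((1:ℝ)/d) with hA
      set B := Sg.filter fun x => mu * r < g x ^ ((1:ℝ)/d) with hB
      set C := Sh.filter fun x => r < h x ^ ((1:ℝ)/d) with hC
      have hAne : A.Nonempty := by
        refine ⟨x0, Finset.mem_filter.2 ⟨hx0S, ?_⟩⟩
        rw [← hadef, ← hlamM]
        exact mul_lt_mul_of_pos_left hrM hlam0
      have hBne : B.Nonempty := by
        refine ⟨y0, Finset.mem_filter.2 ⟨hy0S, ?_⟩⟩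
        rw [← hbdef, ← hmuM]
        exact mul_lt_mul_of_pos_left hrM hmu0
      have hABC : A + B ⊆ C := by
        intro z hz
        obtain ⟨x, hx, y, hy, rfl⟩ := Finset.mem_add.1 hz
        obtain ⟨hxS, hxlt⟩ := Finset.mem_filter.1 hx
        obtain ⟨hyS, hylt⟩ := Finset.mem_filter.1 hy
        have hfxpos : 0 < f x := by
          rcases (hf0 x).lt_or_eq with h' | h'
          · exact h'
          · exfalso
            rw [← h', Real.zero_rpow hene] at hxlt
            exact absurd hxlt (not_lt.2 (by positivity))
        have hgypos : 0 < g y := by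
          rcases (hg0 y).lt_or_eq with h' | h'
          · exact h'
          · exfalso
            rw [← h', Real.zero_rpow hene] at hylt
            exact absurd hylt (not_lt.2 (by positivity))
        have hkey := hsup x y hfxpos hgypos
        have hr : r < h (x + y) ^ ((1:ℝ)/d) := by
          have : lam * r + mu * r = r := by rw [← add_mul, hsum1, one_mul]
          calc r = lam * r + mu * r := this.symm
          _ < f x ^ ((1:ℝ)/d) + g y ^ ((1:ℝ)/d) := add_lt_add hxlt hylt
          _ ≤ h (x + y) ^ ((1:ℝ)/d) := hkey
        have hhz : h (x + y) ≠ 0 := by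
          intro h0
          rw [h0, Real.zero_rpow hene] at hr
          exact absurd hr (not_lt.2 hr0)
        exact Finset.mem_filter.2 ⟨hhs.mem_toFinset.2 hhz, hr⟩
      have hc1 := cauchy_davenport_add_of_linearOrder_isCancelAdd hAne hBne
      have hc2 := Finset.card_le_card hABC
      have hc3 : A.card + B.card ≤ C.card + 1 := by
        have := hAne.card_pos
        omega
      exact_mod_cast hc3
  -- integrability of the pieces
  have hII : ∀ c : ℝ, IntervalIntegrable
      (fun r => if r < c then r ^ (d-1) else 0) volume 0 M := by
    intro c
    have hind : (fun r : ℝ => if r < c then r ^ (d - 1) else 0)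
        = Set.indicator (Set.Iio c) (fun r => r ^ (d - 1)) := by
      funext r; simp [Set.indicator_apply, Set.mem_Iio]
    have hg := (continuous_pow (d-1)).intervalIntegrable (μ := volume) 0 M
    rw [hind, intervalIntegrable_iff]
    rw [intervalIntegrable_iff] at hg
    exact hg.indicator measurableSet_Iio
  -- per-point integrals
  have hfint : ∀ x, ∫ r in (0:ℝ)..M, (if lam * r < f x ^ ((1:ℝ)/d) then r ^ (d-1) else 0)
      = f x / lam ^ d / d := by
    intro x
    have hcond : (fun r : ℝ => if lam * r < f x ^ ((1:ℝ)/d) then r ^ (d-1) else 0)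
        = (fun r : ℝ => if r < f x ^ ((1:ℝ)/d) / lam then r ^ (d-1) else 0) := by
      funext r
      congr 1
      rw [eq_iff_iff, lt_div_iff₀ hlam0, mul_comm]
    have hcle : f x ^ ((1:ℝ)/d) / lam ≤ M := by
      rw [div_le_iff₀ hlam0, mul_comm, hlamM]
      exact hfa x
    rw [hcond, key_int d hd (div_nonneg (Real.rpow_nonneg (hf0 x) _) hlam0.le) hM.le,
      min_eq_left hcle, div_pow, hrd _ (hf0 x)]
  have hgint : ∀ x, ∫ r in (0:ℝ)..M, (if mu * r < g x ^ ((1:ℝ)/d) then r ^ (d-1) else 0)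
      = g x / mu ^ d / d := by
    intro x
    have hcond : (fun r : ℝ => if mu * r < g x ^ ((1:ℝ)/d) then r ^ (d-1) else 0)
        = (fun r : ℝ => if r < g x ^ ((1:ℝ)/d) / mu then r ^ (d-1) else 0) := by
      funext r
      congr 1
      rw [eq_iff_iff, lt_div_iff₀ hmu0, mul_comm]
    have hcle : g x ^ ((1:ℝ)/d) / mu ≤ M := by
      rw [div_le_iff₀ hmu0, mul_comm, hmuM]
      exact hgb x
    rw [hcond, key_int d hd (div_nonneg (Real.rpow_nonneg (hg0 x) _) hmu0.le) hM.le,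
      min_eq_left hcle, div_pow, hrd _ (hg0 x)]
  have hhint : ∀ x, ∫ r in (0:ℝ)..M, (if r < h x ^ ((1:ℝ)/d) then r ^ (d-1) else 0)
      ≤ h x / d := by
    intro x
    rw [key_int d hd (Real.rpow_nonneg (hh0 x) _) hM.le]
    have hmin : (0:ℝ) ≤ min (h x ^ ((1:ℝ)/d)) M := le_min (Real.rpow_nonneg (hh0 x) _) hM.le
    have : (min (h x ^ ((1:ℝ)/d)) M) ^ d ≤ (h x ^ ((1:ℝ)/d)) ^ d :=
      pow_le_pow_left₀ hmin (min_le_left _ _) d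
    rw [hrd _ (hh0 x)] at this
    gcongr
  -- integrability of the shifted pieces
  have hIIf : ∀ x, IntervalIntegrable
      (fun r => if lam * r < f x ^ ((1:ℝ)/d) then r ^ (d-1) else 0) volume 0 M := by
    intro x
    have hcond : (fun r : ℝ => if lam * r < f x ^ ((1:ℝ)/d) then r ^ (d-1) else 0)
        = (fun r : ℝ => if r < f x ^ ((1:ℝ)/d) / lam then r ^ (d-1) else 0) := by
      funext r
      congr 1
      rw [eq_iff_iff, lt_div_iff₀ hlam0, mul_comm]
    rw [hcond]; exact hII _
  have hIIg : ∀ x, IntervalIntegrable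
      (fun r => if mu * r < g x ^ ((1:ℝ)/d) then r ^ (d-1) else 0) volume 0 M := by
    intro x
    have hcond : (fun r : ℝ => if mu * r < g x ^ ((1:ℝ)/d) then r ^ (d-1) else 0)
        = (fun r : ℝ => if r < g x ^ ((1:ℝ)/d) / mu then r ^ (d-1) else 0) := by
      funext r
      congr 1
      rw [eq_iff_iff, lt_div_iff₀ hmu0, mul_comm]
    rw [hcond]; exact hII _
  have hIfsum : IntervalIntegrable
      (fun r => ∑ x ∈ Sf, if lam * r < f x ^ ((1:ℝ)/d) then r ^ (d-1) else 0) volume 0 M := by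
    have hfe : (fun r => ∑ x ∈ Sf, if lam * r < f x ^ ((1:ℝ)/d) then r ^ (d-1) else 0)
        = ∑ x ∈ Sf, (fun r => if lam * r < f x ^ ((1:ℝ)/d) then r ^ (d-1) else 0) := by
      funext r; rw [Finset.sum_apply]
    rw [hfe]; exact IntervalIntegrable.sum _ fun i _ => hIIf i
  have hIgsum : IntervalIntegrable
      (fun r => ∑ x ∈ Sg, if mu * r < g x ^ ((1:ℝ)/d) then r ^ (d-1) else 0) volume 0 M := by
    have hge : (fun r => ∑ x ∈ Sg, if mu * r < g x ^ ((1:ℝ)/d) then r ^ (d-1) else 0)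
        = ∑ x ∈ Sg, (fun r => if mu * r < g x ^ ((1:ℝ)/d) then r ^ (d-1) else 0) := by
      funext r; rw [Finset.sum_apply]
    rw [hge]; exact IntervalIntegrable.sum _ fun i _ => hIIg i
  have hIhsum : IntervalIntegrable
      (fun r => ∑ x ∈ Sh, if r < h x ^ ((1:ℝ)/d) then r ^ (d-1) else 0) volume 0 M := by
    have hhe : (fun r => ∑ x ∈ Sh, if r < h x ^ ((1:ℝ)/d) then r ^ (d-1) else 0)
        = ∑ x ∈ Sh, (fun r => if r < h x ^ ((1:ℝ)/d) then r ^ (d-1) else 0) := by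
      funext r; rw [Finset.sum_apply]
    rw [hhe]; exact IntervalIntegrable.sum _ fun i _ => hII _
  have hIpow : IntervalIntegrable (fun r : ℝ => r ^ (d-1)) volume 0 M :=
    (continuous_pow (d-1)).intervalIntegrable 0 M
  -- the comparison of integrals
  have hmono : ∫ r in (0:ℝ)..M,
        ((∑ x ∈ Sf, if lam * r < f x ^ ((1:ℝ)/d) then r ^ (d-1) else 0)
        + (∑ x ∈ Sg, if mu * r < g x ^ ((1:ℝ)/d) then r ^ (d-1) else 0))
      ≤ ∫ r in (0:ℝ)..M,
        ((∑ x ∈ Sh, if r < h x ^ ((1:ℝ)/d) then r ^ (d-1) else 0) + r ^ (d-1)) := by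
    apply intervalIntegral.integral_mono_on hM.le (hIfsum.add hIgsum) (hIhsum.add hIpow)
    intro r hr
    have hr0 : 0 ≤ r := hr.1
    have hstep := hcard r hr
    have e1 : (∑ x ∈ Sf, if lam * r < f x ^ ((1:ℝ)/d) then r ^ (d-1) else 0)
        = ((Sf.filter fun x => lam * r < f x ^ ((1:ℝ)/d)).card : ℝ) * r ^ (d-1) := by
      rw [← Finset.sum_filter, Finset.sum_const, nsmul_eq_mul]
    have e2 : (∑ x ∈ Sg, if mu * r < g x ^ ((1:ℝ)/d) then r ^ (d-1) else 0)
        = ((Sg.filter fun x => mu * r < g x ^ ((1:ℝ)/d)).card : ℝ) * r ^ (d-1) := by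
      rw [← Finset.sum_filter, Finset.sum_const, nsmul_eq_mul]
    have e3 : (∑ x ∈ Sh, if r < h x ^ ((1:ℝ)/d) then r ^ (d-1) else 0)
        = ((Sh.filter fun x => r < h x ^ ((1:ℝ)/d)).card : ℝ) * r ^ (d-1) := by
      rw [← Finset.sum_filter, Finset.sum_const, nsmul_eq_mul]
    rw [e1, e2, e3]
    have hmul := mul_le_mul_of_nonneg_right hstep (pow_nonneg hr0 (d-1))
    nlinarith [hmul]
  -- compute the left integral
  have hLHS : ∫ r in (0:ℝ)..M,
        ((∑ x ∈ Sf, if lam * r < f x ^ ((1:ℝ)/d) then r ^ (d-1) else 0)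
        + (∑ x ∈ Sg, if mu * r < g x ^ ((1:ℝ)/d) then r ^ (d-1) else 0))
      = F / lam ^ d / d + G / mu ^ d / d := by
    rw [intervalIntegral.integral_add hIfsum hIgsum]
    congr 1
    · rw [intervalIntegral.integral_finset_sum fun i _ => hIIf i,
        Finset.sum_congr rfl fun x _ => hfint x, ← Finset.sum_div, ← Finset.sum_div]
    · rw [intervalIntegral.integral_finset_sum fun i _ => hIIg i,
        Finset.sum_congr rfl fun x _ => hgint x, ← Finset.sum_div, ← Finset.sum_div]
  -- bound the right integral
  have hRHS : ∫ r in (0:ℝ)..M,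
        ((∑ x ∈ Sh, if r < h x ^ ((1:ℝ)/d) then r ^ (d-1) else 0) + r ^ (d-1))
      ≤ H / d + M ^ d / d := by
    rw [intervalIntegral.integral_add hIhsum hIpow]
    apply add_le_add
    · rw [intervalIntegral.integral_finset_sum fun i _ => hII _]
      calc (∑ x ∈ Sh, ∫ r in (0:ℝ)..M, (if r < h x ^ ((1:ℝ)/d) then r ^ (d-1) else 0))
          ≤ ∑ x ∈ Sh, h x / d := Finset.sum_le_sum fun i _ => hhint i
        _ = H / d := by rw [← Finset.sum_div]
    · rw [pow_int d hd]
  have hchain : F / lam ^ d / d + G / mu ^ d / d ≤ H / d + M ^ d / d := by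
    rw [← hLHS]; exact le_trans hmono hRHS
  have hHge : F / lam ^ d + G / mu ^ d - M ^ d ≤ H := by
    have h6 := mul_le_mul_of_nonneg_right hchain (le_of_lt hdR)
    rw [add_mul, add_mul, div_mul_cancel₀ _ hdR.ne', div_mul_cancel₀ _ hdR.ne',
      div_mul_cancel₀ _ hdR.ne', div_mul_cancel₀ _ hdR.ne'] at h6
    linarith
  -- conclude by the algebraic lemma
  have hap : a ≤ F ^ ((1:ℝ)/d) := by
    have hmono2 := Real.rpow_le_rpow (by positivity) haF he0
    rwa [hrd' a ha.le] at hmono2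
  have hbq : b ≤ G ^ ((1:ℝ)/d) := by
    have hmono2 := Real.rpow_le_rpow (by positivity) hbG he0
    rwa [hrd' b hb.le] at hmono2
  have halg := alg_step d ha hb hap hbq
  rw [hrd _ hF0, hrd _ hG0, ← hMdef, ← hlamdef, ← hmudef] at halg
  have hfin : (F ^ ((1:ℝ)/d) + G ^ ((1:ℝ)/d)) ^ d ≤ H := le_trans halg hHge
  have hlast := Real.rpow_le_rpow (by positivity) hfin he0
  rwa [hrd' _ (by positivity)] at hlast
end

section
/- Lev's iterated sumset bound (weak form): suppose A ⊆ {0,…,ℓ} with 0, ℓ ∈ A, |A| ≥ 3, and gcd(A) = 1. Then for every h ∈ ℕ, |h·A| ≥ h·ℓ − ℓ²/(|A|−2), where h·A is the h-fold iterated sumset. -/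
open Pointwise Finset

set_option linter.unusedSectionVars false

namespace LevAux

variable {G : Type*} [AddCommGroup G] [Fintype G] [DecidableEq G]

def frags (S : Finset G) : Finset (Finset G) :=
  univ.filter (fun B => B.Nonempty ∧ B + S ≠ univ)

lemma mem_frags {S B : Finset G} : B ∈ frags S ↔ B.Nonempty ∧ B + S ≠ univ := by
  simp [frags]

noncomputable def kap (S : Finset G) : ℕ := sInf ((fun B => (B + S).card - B.card) '' ↑(frags S))

noncomputable def atoms (S : Finset G) : Finset (Finset G) :=
  (frags S).filter (fun B => (B + S).card = B.card + kap S)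

noncomputable def asize (S : Finset G) : ℕ := sInf (card '' ((atoms S : Set (Finset G))))

lemma subset_add_self {S B : Finset G} (h0S : (0 : G) ∈ S) : B ⊆ B + S := by
  intro b hb
  simpa using Finset.add_mem_add hb h0S

lemma frag_card_add {S B : Finset G} (h0S : (0 : G) ∈ S) (hB : B ∈ frags S) :
    B.card + kap S ≤ (B + S).card := by
  have h1 : kap S ≤ (B + S).card - B.card := Nat.sInf_le ⟨B, by simpa using hB, rfl⟩
  have h2 : B.card ≤ (B + S).card := Finset.card_le_card (subset_add_self h0S)
  omega

lemma zero_mem_frags {S : Finset G} (h0S : (0 : G) ∈ S) (hSu : S ≠ univ) :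
    (0 : Finset G) ∈ frags S := by
  rw [mem_frags, zero_add]
  exact ⟨⟨0, Finset.zero_mem_zero⟩, hSu⟩

lemma exists_atom {S : Finset G} (h0S : (0 : G) ∈ S) (hSu : S ≠ univ) :
    ∃ K ∈ atoms S, K.card = asize S := by
  have hne : ((fun B => (B + S).card - B.card) '' ↑(frags S)).Nonempty :=
    ⟨_, 0, by simpa using zero_mem_frags h0S hSu, rfl⟩
  obtain ⟨B, hB, hBe⟩ := Nat.sInf_mem hne
  simp only [Finset.mem_coe] at hB
  have h2 : B.card ≤ (B + S).card := Finset.card_le_card (subset_add_self h0S)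
  have hBa : B ∈ atoms S := by
    rw [atoms, Finset.mem_filter]
    refine ⟨hB, ?_⟩
    have hBe' : (B + S).card - B.card = kap S := hBe
    omega
  have hne2 : (card '' ↑(atoms S)).Nonempty := ⟨_, B, by simpa using hBa, rfl⟩
  obtain ⟨K, hK, hKe⟩ := Nat.sInf_mem hne2
  simp only [Finset.mem_coe] at hK
  exact ⟨K, hK, hKe⟩

lemma asize_le {S B : Finset G} (hB : B ∈ atoms S) : asize S ≤ B.card :=
  Nat.sInf_le ⟨B, by simpa using hB, rfl⟩

-- translation lemmas
lemma translate_card (g : G) (B : Finset G) : ({g} + B).card = B.card := by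
  rw [Finset.singleton_add]
  exact Finset.card_vadd_finset g B

lemma translate_univ_iff (g : G) (B : Finset G) : ({g} : Finset G) + B = univ ↔ B = univ := by
  constructor
  · intro h
    apply Finset.eq_univ_of_card
    rw [← translate_card g B, h, Finset.card_univ]
  · intro h
    apply Finset.eq_univ_of_card
    rw [translate_card, h, Finset.card_univ]

lemma translate_mem_frags {S B : Finset G} (g : G) (hB : B ∈ frags S) :
    {g} + B ∈ frags S := by
  rw [mem_frags] at hB ⊢
  obtain ⟨⟨b, hb⟩, hBu⟩ := hB
  refine ⟨⟨g + b, Finset.add_mem_add (mem_singleton_self g) hb⟩, ?_⟩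
  rw [add_assoc]
  exact fun h => hBu ((translate_univ_iff g (B + S)).1 h)

lemma translate_mem_atoms {S B : Finset G} (g : G) (hB : B ∈ atoms S) :
    {g} + B ∈ atoms S := by
  rw [atoms, Finset.mem_filter] at hB ⊢
  refine ⟨translate_mem_frags g hB.1, ?_⟩
  rw [add_assoc, translate_card, translate_card, hB.2]
lemma compl_frag {S B : Finset G} (h0S : (0 : G) ∈ S) (hBne : B.Nonempty) (hBu : B + S ≠ univ) :
    ((univ \ (B + S)).Nonempty ∧ (univ \ (B + S)) + -S ≠ univ) ∧
      (univ \ (B + S)) + -S ⊆ univ \ B := by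
  have hW : (univ \ (B + S)).Nonempty := by
    rw [Finset.sdiff_nonempty]
    exact fun h => hBu (Finset.univ_subset_iff.mp h)
  have hsub : (univ \ (B + S)) + -S ⊆ univ \ B := by
    intro x hx
    rw [Finset.mem_add] at hx
    obtain ⟨w, hw, t, ht, rfl⟩ := hx
    rw [Finset.mem_neg] at ht
    obtain ⟨s, hs, rfl⟩ := ht
    rw [Finset.mem_sdiff] at hw ⊢
    refine ⟨mem_univ _, fun hwB => hw.2 ?_⟩
    have : (w + -s) + s ∈ B + S := Finset.add_mem_add hwB hs
    simpa using this
  refine ⟨⟨hW, ?_⟩, hsub⟩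
  obtain ⟨b, hb⟩ := hBne
  intro h
  have hb2 : b ∈ (univ \ (B + S)) + -S := by rw [h]; exact mem_univ b
  have hbmem : b ∈ univ \ B := hsub hb2
  rw [Finset.mem_sdiff] at hbmem
  exact hbmem.2 hb

lemma compl_mem_frags {S B : Finset G} (h0S : (0 : G) ∈ S) (hB : B ∈ frags S) :
    (univ \ (B + S)) ∈ frags (-S) := by
  rw [mem_frags] at hB ⊢
  exact (compl_frag h0S hB.1 hB.2).1

lemma kap_neg_le {S : Finset G} (h0S : (0 : G) ∈ S) (hSu : S ≠ univ) :
    kap (-S) ≤ kap S := by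
  obtain ⟨K, hK, _⟩ := exists_atom h0S hSu
  rw [atoms, Finset.mem_filter] at hK
  obtain ⟨hKf, hKe⟩ := hK
  set W := univ \ (K + S) with hWdef
  have hWf : W ∈ frags (-S) := compl_mem_frags h0S hKf
  have hWs : W + -S ⊆ univ \ K := (compl_frag h0S (mem_frags.1 hKf).1 (mem_frags.1 hKf).2).2
  have h1 : kap (-S) ≤ (W + -S).card - W.card := Nat.sInf_le ⟨W, by simpa using hWf, rfl⟩
  have h2 : (W + -S).card ≤ Fintype.card G - K.card := by
    calc (W + -S).card ≤ (univ \ K).card := Finset.card_le_card hWs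
    _ = Fintype.card G - K.card := by rw [Finset.card_sdiff_of_subset (subset_univ _), Finset.card_univ]
  have h3 : W.card = Fintype.card G - (K + S).card := by
    rw [hWdef, Finset.card_sdiff_of_subset (subset_univ _), Finset.card_univ]
  have h4 : (K + S).card ≤ Fintype.card G := Finset.card_le_univ _
  have h5 : K.card ≤ (K + S).card := Finset.card_le_card (subset_add_self h0S)
  omega

lemma neg_ne_univ {S : Finset G} (hSu : S ≠ univ) : -S ≠ univ := by
  intro h
  apply hSu
  apply Finset.eq_univ_of_card
  rw [← Finset.card_neg, h, Finset.card_univ]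

lemma zero_mem_neg {S : Finset G} (h0S : (0 : G) ∈ S) : (0 : G) ∈ -S := by
  rw [Finset.mem_neg]
  exact ⟨0, h0S, neg_zero⟩

lemma kap_neg {S : Finset G} (h0S : (0 : G) ∈ S) (hSu : S ≠ univ) :
    kap (-S) = kap S := by
  have h1 := kap_neg_le h0S hSu
  have h2 := kap_neg_le (zero_mem_neg h0S) (neg_ne_univ hSu)
  rw [neg_neg] at h2
  omega

lemma atom_inter_eq {S : Finset G} (h0S : (0 : G) ∈ S) (hSu : S ≠ univ)
    (hA : asize S ≤ asize (-S))
    {K₁ K₂ : Finset G} (h₁ : K₁ ∈ atoms S) (h₂ : K₂ ∈ atoms S)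
    (hc₁ : K₁.card = asize S) (hc₂ : K₂.card = asize S)
    (hI : (K₁ ∩ K₂).Nonempty) : K₁ = K₂ := by
  by_cases hsub : K₁ ⊆ K₂
  · exact Finset.eq_of_subset_of_card_le hsub (by omega)
  rw [atoms, Finset.mem_filter] at h₁ h₂
  obtain ⟨hKf₁, hKe₁⟩ := h₁
  obtain ⟨hKf₂, hKe₂⟩ := h₂
  set I := K₁ ∩ K₂ with hIdef
  have hIcard : 1 ≤ I.card := Finset.card_pos.mpr hI
  have hIlt : I.card < K₁.card := by
    apply Finset.card_lt_card
    rw [Finset.ssubset_iff_subset_ne]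
    refine ⟨Finset.inter_subset_left, fun h => hsub ?_⟩
    rw [← h]
    exact Finset.inter_subset_right
  have hIf : I ∈ frags S := by
    rw [mem_frags]
    refine ⟨hI, fun h => (mem_frags.1 hKf₁).2 (Finset.univ_subset_iff.mp ?_)⟩
    rw [← h]
    exact Finset.add_subset_add_right Finset.inter_subset_left
  have hIstrict : I.card + kap S + 1 ≤ (I + S).card := by
    have hge := frag_card_add h0S hIf
    rcases Nat.lt_or_ge (I.card + kap S) (I + S).card with h | h
    · omega
    · exfalso
      have heq : (I + S).card = I.card + kap S := by omega
      have : I ∈ atoms S := by rw [atoms, Finset.mem_filter]; exact ⟨hIf, heq⟩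
      have := asize_le this
      omega
  have hIs : I + S ⊆ (K₁ + S) ∩ (K₂ + S) :=
    Finset.subset_inter (Finset.add_subset_add_right Finset.inter_subset_left)
      (Finset.add_subset_add_right Finset.inter_subset_right)
  have hcardI : (I + S).card ≤ ((K₁ + S) ∩ (K₂ + S)).card := Finset.card_le_card hIs
  have hui : ((K₁ + S) ∪ (K₂ + S)).card + ((K₁ + S) ∩ (K₂ + S)).card
      = (K₁ + S).card + (K₂ + S).card := Finset.card_union_add_card_inter _ _
  have hU : (K₁ ∪ K₂) + S = (K₁ + S) ∪ (K₂ + S) := Finset.union_add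
  have hUI : (K₁ ∪ K₂).card + I.card = K₁.card + K₂.card := Finset.card_union_add_card_inter _ _
  by_cases hUu : (K₁ ∪ K₂) + S = univ
  · -- union covers everything; use the complement fragment of -S
    have hUcard : ((K₁ + S) ∪ (K₂ + S)).card = Fintype.card G := by
      rw [← hU, hUu, Finset.card_univ]
    set W := univ \ (K₁ + S) with hWdef
    have hWf : W ∈ frags (-S) := compl_mem_frags h0S hKf₁
    have hWs : W + -S ⊆ univ \ K₁ :=
      (compl_frag h0S (mem_frags.1 hKf₁).1 (mem_frags.1 hKf₁).2).2
    have hW1 : W.card + kap (-S) ≤ (W + -S).card := frag_card_add (zero_mem_neg h0S) hWf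
    have hW2 : (W + -S).card ≤ Fintype.card G - K₁.card := by
      calc (W + -S).card ≤ (univ \ K₁).card := Finset.card_le_card hWs
      _ = Fintype.card G - K₁.card := by rw [Finset.card_sdiff_of_subset (subset_univ _), Finset.card_univ]
    have hW3 : W.card = Fintype.card G - (K₁ + S).card := by
      rw [hWdef, Finset.card_sdiff_of_subset (subset_univ _), Finset.card_univ]
    have hkn : kap (-S) = kap S := kap_neg h0S hSu
    have hle1 : (K₁ + S).card ≤ Fintype.card G := Finset.card_le_univ _
    have hle2 : K₁.card ≤ (K₁ + S).card := Finset.card_le_card (subset_add_self h0S)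
    have hWeq : (W + -S).card = W.card + kap (-S) := by omega
    have hWatom : W ∈ atoms (-S) := by
      rw [atoms, Finset.mem_filter]; exact ⟨hWf, hWeq⟩
    have hAW := asize_le hWatom
    omega
  · have hUf : (K₁ ∪ K₂) ∈ frags S := by
      rw [mem_frags]
      obtain ⟨x, hx⟩ := (mem_frags.1 hKf₁).1
      exact ⟨⟨x, Finset.mem_union_left _ hx⟩, hUu⟩
    have hUge := frag_card_add h0S hUf
    rw [hU] at hUge
    omega

lemma kappa_half_aux {S : Finset G} (h0S : (0 : G) ∈ S) (hSu : S ≠ univ)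
    (hgen : AddSubgroup.closure (S : Set G) = ⊤)
    (hA : asize S ≤ asize (-S)) : S.card ≤ 2 * kap S := by
  obtain ⟨K₀, hK₀, hK₀c⟩ := exists_atom h0S hSu
  obtain ⟨k₀, hk₀⟩ := (mem_frags.1 (Finset.mem_filter.1 hK₀).1).1
  set K : Finset G := {-k₀} + K₀ with hKdef
  have hKatom : K ∈ atoms S := translate_mem_atoms _ hK₀
  have hKcard : K.card = asize S := by rw [hKdef, translate_card, hK₀c]
  have h0K : (0 : G) ∈ K := by
    rw [hKdef]
    simpa using Finset.add_mem_add (mem_singleton_self (-k₀)) hk₀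
  -- K is closed under addition
  have hclosed : ∀ g ∈ K, {g} + K = K := by
    intro g hg
    apply atom_inter_eq h0S hSu hA (translate_mem_atoms g hKatom) hKatom
      (by rw [translate_card, hKcard]) hKcard
    refine ⟨g, Finset.mem_inter.mpr ⟨?_, hg⟩⟩
    simpa using Finset.add_mem_add (mem_singleton_self g) h0K
  have hadd : ∀ x ∈ K, ∀ y ∈ K, x + y ∈ K := by
    intro x hx y hy
    have := hclosed x hx
    rw [← this]
    exact Finset.add_mem_add (mem_singleton_self x) hy
  have hnsmul : ∀ (n : ℕ), ∀ x ∈ K, n • x + 0 ∈ K → True := fun _ _ _ _ => trivial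
  have hsm : ∀ (n : ℕ), ∀ x ∈ K, (n + 1) • x ∈ K := by
    intro n
    induction n with
    | zero => intro x hx; simpa using hx
    | succ m ih =>
        intro x hx
        have h1 := ih x hx
        have := hadd _ h1 _ hx
        rwa [← succ_nsmul] at this
  have hneg : ∀ x ∈ K, -x ∈ K := by
    intro x hx
    have hord : 0 < addOrderOf x := addOrderOf_pos x
    rcases Nat.exists_eq_add_of_lt hord with ⟨m, hm⟩
    -- addOrderOf x = m + 1
    have hzero : addOrderOf x • x = 0 := addOrderOf_nsmul_eq_zero x
    rcases m with _ | m'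
    · -- order 1 : x = 0
      have : x = 0 := by
        have h1 : (1 : ℕ) • x = 0 := by
          rw [show (1 : ℕ) = addOrderOf x by omega]; exact hzero
        simpa using h1
      rw [this, neg_zero]; exact h0K
    · have hmem : (m' + 1) • x ∈ K := hsm m' x hx
      have : (m' + 1) • x + x = 0 := by
        rw [← succ_nsmul]
        rw [show m' + 1 + 1 = addOrderOf x by omega]
        exact hzero
      have hx' : (m' + 1) • x = -x := by
        rw [eq_neg_of_add_eq_zero_left this]
      rwa [hx'] at hmem
  -- S is not contained in K
  have hSK : ¬ S ⊆ K := by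
    intro hSsub
    have hKuniv : K = univ := by
      have : AddSubgroup.closure (S : Set G) ≤ AddSubgroup.mk
          ⟨⟨(K : Set G), by intro a b ha hb; exact hadd a ha b hb⟩, by exact_mod_cast h0K⟩
          (by intro a ha; exact hneg a ha) := by
        apply AddSubgroup.closure_le _ |>.mpr
        exact_mod_cast hSsub
      rw [hgen] at this
      apply Finset.eq_univ_of_forall
      intro x
      exact_mod_cast this (AddSubgroup.mem_top x)
    have := (mem_frags.1 (Finset.mem_filter.1 hKatom).1).2
    apply this
    apply Finset.univ_subset_iff.mp
    rw [← hKuniv]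
    exact subset_add_self h0S
  obtain ⟨s, hsS, hsK⟩ := Finset.not_subset.mp hSK
  -- {s} + K is disjoint from K, both inside K + S
  have hdisj : Disjoint ({s} + K) K := by
    rw [Finset.disjoint_left]
    intro x hx hxK
    rw [Finset.mem_add] at hx
    obtain ⟨u, hu, y, hy, rfl⟩ := hx
    rw [Finset.mem_singleton] at hu
    subst hu
    apply hsK
    have : u + y + -y ∈ K := hadd _ hxK _ (hneg y hy)
    simpa using this
  have hsub1 : {s} + K ⊆ K + S := by
    intro x hx
    rw [Finset.mem_add] at hx
    obtain ⟨u, hu, y, hy, rfl⟩ := hx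
    rw [Finset.mem_singleton] at hu
    subst hu
    rw [add_comm u y]
    exact Finset.add_mem_add hy hsS
  have hsub2 : K ⊆ K + S := subset_add_self h0S
  have hsub3 : ({s} + K) ∪ K ⊆ K + S := Finset.union_subset hsub1 hsub2
  have hcard1 : (({s} + K) ∪ K).card = K.card + K.card := by
    rw [Finset.card_union_of_disjoint hdisj, translate_card]
  have hc2 : K.card + K.card ≤ (K + S).card := by
    rw [← hcard1]; exact Finset.card_le_card hsub3
  have hc3 : S.card ≤ (K + S).card := by
    apply Finset.card_le_card
    intro x hx
    have : (0 : G) + x ∈ K + S := Finset.add_mem_add h0K hx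
    simpa using this
  have hKe : (K + S).card = K.card + kap S := (Finset.mem_filter.1 hKatom).2
  omega

theorem kappa_half {S : Finset G} (h0S : (0 : G) ∈ S) (hSu : S ≠ univ)
    (hgen : AddSubgroup.closure (S : Set G) = ⊤) : S.card ≤ 2 * kap S := by
  have hgen' : AddSubgroup.closure ((-S : Finset G) : Set G) = ⊤ := by
    rw [Finset.coe_neg]
    rw [eq_top_iff, ← hgen]
    apply AddSubgroup.closure_le _ |>.mpr
    intro x hx
    have : -x ∈ AddSubgroup.closure (-(S : Set G)) := by
      apply AddSubgroup.subset_closure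
      simpa using hx
    simpa using AddSubgroup.neg_mem _ this
  rcases le_total (asize S) (asize (-S)) with h | h
  · exact kappa_half_aux h0S hSu hgen h
  · have h' : asize (-S) ≤ asize (- -S) := by rwa [neg_neg]
    have := kappa_half_aux (zero_mem_neg h0S) (neg_ne_univ hSu) hgen' h'
    rwa [Finset.card_neg, kap_neg h0S hSu] at this

theorem add_growth {S : Finset G} (h0S : (0 : G) ∈ S)
    (hgen : AddSubgroup.closure (S : Set G) = ⊤)
    {B : Finset G} (hB : B.Nonempty) (hBu : B + S ≠ univ) :
    2 * B.card + S.card ≤ 2 * (B + S).card := by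
  have hSu : S ≠ univ := by
    intro h
    apply hBu
    obtain ⟨b, hb⟩ := hB
    apply Finset.univ_subset_iff.mp
    intro x _
    have : b + (x - b) ∈ B + S := Finset.add_mem_add hb (by rw [h]; exact mem_univ _)
    simpa using this
  have hBf : B ∈ frags S := mem_frags.mpr ⟨hB, hBu⟩
  have h1 := frag_card_add h0S hBf
  have h2 := kappa_half h0S hSu hgen
  omega

section Main

variable {ℓ : ℕ} [NeZero ℓ]

lemma image_nsmul_cast (A : Finset ℤ) (j : ℕ) :
    (j • A).image (fun x : ℤ => (x : ZMod ℓ)) = j • (A.image (fun x : ℤ => (x : ZMod ℓ))) := by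
  induction j with
  | zero =>
      rw [zero_nsmul, zero_nsmul]
      ext x
      simp [Finset.mem_zero]
  | succ m ih =>
      rw [succ_nsmul, succ_nsmul, ← ih]
      have h := Finset.image_add (Int.castAddHom (ZMod ℓ)) (s := m • A) (t := A)
      simpa using h

lemma closure_int_top (A : Finset ℤ) (hgcd : A.gcd id = 1) :
    AddSubgroup.closure (A : Set ℤ) = ⊤ := by
  obtain ⟨a, ha⟩ := Int.subgroup_cyclic (AddSubgroup.closure (A : Set ℤ))
  have hdvd : ∀ x ∈ A, a ∣ x := by
    intro x hx
    have hmem : x ∈ AddSubgroup.closure (A : Set ℤ) :=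
      AddSubgroup.subset_closure (by exact_mod_cast hx)
    rw [ha, AddSubgroup.mem_closure_singleton] at hmem
    obtain ⟨n, hn⟩ := hmem
    exact ⟨n, by rw [← hn, smul_eq_mul]; ring⟩
  have hone : a ∣ 1 := by
    have := Finset.dvd_gcd (f := id) (fun x hx => hdvd x hx)
    rwa [hgcd] at this
  rw [ha, eq_top_iff]
  intro x _
  rw [AddSubgroup.mem_closure_singleton]
  have hax : a ∣ x := (isUnit_of_dvd_one hone).dvd
  obtain ⟨c, hc⟩ := hax
  exact ⟨c, by rw [smul_eq_mul, hc]; ring⟩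

lemma closure_zmod_top (A : Finset ℤ) (hgcd : A.gcd id = 1) :
    AddSubgroup.closure ((A.image (fun x : ℤ => (x : ZMod ℓ))) : Set (ZMod ℓ)) = ⊤ := by
  rw [Finset.coe_image]
  have h1 : (fun x : ℤ => (x : ZMod ℓ)) = ⇑(Int.castAddHom (ZMod ℓ)) := rfl
  rw [h1, ← AddMonoidHom.map_closure, closure_int_top A hgcd]
  rw [eq_top_iff]
  intro x _
  obtain ⟨y, hy⟩ := ZMod.intCast_surjective (n := ℓ) x
  exact ⟨y, AddSubgroup.mem_top y, hy⟩


-- quadratic sum bound, pure ℕ arithmetic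
lemma sum_deficit_bound (L d : ℕ) :
    ∀ M : ℕ, 2 * d * (∑ j ∈ Finset.range M, (2 * L - d * (j + 2)))
      + (2 * L - d * (M + 1)) ^ 2 ≤ (2 * L - d) ^ 2 := by
  intro M
  induction M with
  | zero => simp
  | succ m ih =>
      rw [Finset.sum_range_succ]
      set a := 2 * L - d * (m + 1) with ha
      set b := 2 * L - d * (m + 2) with hb
      have hdd : d * (m + 2) = d * (m + 1) + d := by ring
      have hkey : 2 * d * b + b ^ 2 ≤ a ^ 2 := by
        rcases le_total (d * (m + 2)) (2 * L) with hle | hle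
        · have hab : a = b + d := by omega
          rw [hab]
          nlinarith
        · have hb0 : b = 0 := by omega
          rw [hb0]
          simp
      rw [Nat.mul_add]
      linarith [ih, hkey]

lemma sum_split_first (g : ℕ → ℕ) (n : ℕ) (hn : 0 < n) :
    ∑ j ∈ Finset.range n, g j = g 0 + ∑ j ∈ Finset.range (n - 1), g (j + 1) := by
  rcases n with _ | m
  · omega
  · rw [Finset.sum_range_succ' g m]
    simp [add_comm]


end Main
end LevAux

open Pointwise

set_option maxHeartbeats 1000000 in
theorem lev_iterated_sumset (ℓ : ℕ) (hℓ : 0 < ℓ) (A : Finset ℤ)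
    (hsub : A ⊆ Finset.Icc 0 (ℓ : ℤ)) (h0 : (0 : ℤ) ∈ A) (hℓA : (ℓ : ℤ) ∈ A)
    (hcard : 3 ≤ A.card) (hgcd : A.gcd id = 1) :
    ∀ h : ℕ, 0 < h → (((h • A).card : ℝ)) ≥ h * ℓ - (ℓ : ℝ) ^ 2 / (A.card - 2) := by
  intro h _
  haveI : NeZero ℓ := ⟨hℓ.ne'⟩
  classical
  set Ab : Finset (ZMod ℓ) := A.image (fun x : ℤ => (x : ZMod ℓ)) with hAb
  set d : ℕ := Ab.card with hd
  -- |Ab| = |A| - 1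
  have hcastl : ((ℓ : ℤ) : ZMod ℓ) = ((0 : ℤ) : ZMod ℓ) := by
    push_cast
    simp [ZMod.natCast_self]
  have him : Ab = (A.erase (ℓ : ℤ)).image (fun x : ℤ => (x : ZMod ℓ)) := by
    apply Finset.Subset.antisymm
    · intro y hy
      rw [hAb, Finset.mem_image] at hy
      obtain ⟨x, hx, rfl⟩ := hy
      by_cases hxl : x = (ℓ : ℤ)
      · subst hxl
        rw [hcastl]
        refine Finset.mem_image_of_mem _ (Finset.mem_erase.mpr ⟨?_, h0⟩)
        exact_mod_cast hℓ.ne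
      · exact Finset.mem_image_of_mem _ (Finset.mem_erase.mpr ⟨hxl, hx⟩)
    · exact Finset.image_subset_image (Finset.erase_subset _ _)
  have hbound : ∀ x ∈ A.erase (ℓ : ℤ), 0 ≤ x ∧ x < (ℓ : ℤ) := by
    intro x hx
    rw [Finset.mem_erase] at hx
    have := hsub hx.2
    rw [Finset.mem_Icc] at this
    exact ⟨this.1, lt_of_le_of_ne this.2 hx.1⟩
  have hinj : Set.InjOn (fun x : ℤ => (x : ZMod ℓ)) (A.erase (ℓ : ℤ)) := by
    intro x hx y hy hxy
    obtain ⟨hx0, hxl⟩ := hbound x hx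
    obtain ⟨hy0, hyl⟩ := hbound y hy
    have hmod : ((ℓ : ℕ) : ℤ) ∣ y - x := ((ZMod.intCast_eq_intCast_iff x y ℓ).mp hxy).dvd
    obtain ⟨c, hc⟩ := hmod
    have hℓ' : (0 : ℤ) < (ℓ : ℤ) := by exact_mod_cast hℓ
    have hc0 : c = 0 := by
      rcases lt_trichotomy c 0 with hlt | heq | hgt
      · nlinarith
      · exact heq
      · nlinarith
    rw [hc0, mul_zero] at hc
    omega
  have hdcard : d + 1 = A.card := by
    rw [hd, him, Finset.card_image_of_injOn hinj, Finset.card_erase_of_mem hℓA]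
    omega
  have hd2 : 2 ≤ d := by omega
  have hdl : d ≤ ℓ := by
    have := Finset.card_le_univ Ab
    rwa [ZMod.card] at this
  have h0Ab : (0 : ZMod ℓ) ∈ Ab := by
    rw [hAb, Finset.mem_image]
    exact ⟨0, h0, by push_cast; ring⟩
  have hgen : AddSubgroup.closure (Ab : Set (ZMod ℓ)) = ⊤ := by
    rw [hAb]
    exact LevAux.closure_zmod_top (ℓ := ℓ) A hgcd
  -- growth of iterated sumsets in ZMod ℓ
  have hmono : ∀ j k : ℕ, j ≤ k → j • Ab ⊆ k • Ab := by
    intro j k hjk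
    induction k, hjk using Nat.le_induction with
    | base => exact Finset.Subset.refl _
    | succ n hn ih =>
        refine ih.trans ?_
        intro x hx
        rw [succ_nsmul]
        simpa using Finset.add_mem_add hx h0Ab
  have hzero_mem : ∀ j : ℕ, (0 : ZMod ℓ) ∈ j • Ab := by
    intro j
    have h1 := Finset.nsmul_mem_nsmul h0Ab (n := j)
    simpa using h1
  have hcardle : ∀ j : ℕ, (j • Ab).card ≤ ℓ := by
    intro j
    have := Finset.card_le_univ (j • Ab)
    rwa [ZMod.card] at this
  have hgrow : ∀ j : ℕ, 1 ≤ j → min (2 * ℓ) (d * (j + 1)) ≤ 2 * (j • Ab).card := by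
    intro j hj
    induction j, hj using Nat.le_induction with
    | base =>
        rw [one_nsmul]
        calc min (2 * ℓ) (d * (1 + 1)) ≤ d * (1 + 1) := min_le_right _ _
        _ = 2 * Ab.card := by rw [← hd]; ring
    | succ n hn ih =>
        rw [succ_nsmul]
        by_cases hc : n • Ab + Ab = Finset.univ
        · rw [hc, Finset.card_univ, ZMod.card]
          exact min_le_left _ _
        · have hgrowth := LevAux.add_growth h0Ab hgen ⟨0, hzero_mem n⟩ hc
          rw [← hd] at hgrowth
          have hdd1 : d * (n + 1 + 1) = d * (n + 1) + d := by ring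
          rcases le_total (d * (n + 1)) (2 * ℓ) with hle | hle
          · rw [min_eq_right hle] at ih
            calc min (2 * ℓ) (d * (n + 1 + 1)) ≤ d * (n + 1 + 1) := min_le_right _ _
            _ ≤ 2 * (n • Ab + Ab).card := by omega
          · rw [min_eq_left hle] at ih
            calc min (2 * ℓ) (d * (n + 1 + 1)) ≤ 2 * ℓ := min_le_left _ _
            _ ≤ 2 * (n • Ab + Ab).card := by omega
  have hfull : ℓ • Ab = Finset.univ := by
    apply Finset.eq_univ_of_card
    have hg := hgrow ℓ hℓ
    have hmin : min (2 * ℓ) (d * (ℓ + 1)) = 2 * ℓ := by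
      apply min_eq_left
      nlinarith
    rw [hmin] at hg
    have hle := hcardle ℓ
    rw [ZMod.card]
    omega
  have hex : ∀ ρ : ZMod ℓ, ∃ j, ρ ∈ j • Ab := fun ρ =>
    ⟨ℓ, by rw [hfull]; exact Finset.mem_univ ρ⟩
  have hjml : ∀ ρ : ZMod ℓ, Nat.find (hex ρ) ≤ ℓ := fun ρ =>
    Nat.find_le (by rw [hfull]; exact Finset.mem_univ ρ)
  have hmemiff : ∀ (ρ : ZMod ℓ) (j : ℕ), ρ ∈ j • Ab ↔ Nat.find (hex ρ) ≤ j := by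
    intro ρ j
    constructor
    · exact fun hj => Nat.find_le hj
    · intro hj
      exact hmono _ _ hj (Nat.find_spec (hex ρ))
  -- fiber counting
  have hfiber : ∀ ρ : ZMod ℓ, Nat.find (hex ρ) ≤ h →
      h + 1 - Nat.find (hex ρ) ≤ ((h • A).filter (fun x : ℤ => (x : ZMod ℓ) = ρ)).card := by
    intro ρ hρ
    have hspec : ρ ∈ Nat.find (hex ρ) • Ab := Nat.find_spec (hex ρ)
    set j := Nat.find (hex ρ) with hjdef
    have himg := LevAux.image_nsmul_cast (ℓ := ℓ) A j
    rw [hAb, ← himg, Finset.mem_image] at hspec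
    obtain ⟨v, hv, hvc⟩ := hspec
    have hsubimg : Finset.image (fun q : ℕ => v + (q : ℤ) * ℓ) (Finset.range (h + 1 - j))
        ⊆ (h • A).filter (fun x : ℤ => (x : ZMod ℓ) = ρ) := by
      intro x hx
      rw [Finset.mem_image] at hx
      obtain ⟨q, hq, rfl⟩ := hx
      rw [Finset.mem_range] at hq
      rw [Finset.mem_filter]
      constructor
      · have hsplit : j + q + (h - j - q) = h := by omega
        have h1 : v + q • (ℓ : ℤ) + (h - j - q) • (0 : ℤ) ∈ (j + q + (h - j - q)) • A := by
          rw [add_nsmul, add_nsmul]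
          exact Finset.add_mem_add (Finset.add_mem_add hv
            (Finset.nsmul_mem_nsmul hℓA (n := q)))
            (Finset.nsmul_mem_nsmul h0 (n := h - j - q))
        rw [hsplit] at h1
        simpa [nsmul_eq_mul] using h1
      · push_cast
        rw [hvc]
        simp [ZMod.natCast_self]
    have hinjq : Function.Injective (fun q : ℕ => v + (q : ℤ) * ℓ) := by
      intro a b hab
      simp only at hab
      have hℓ' : (0 : ℤ) < (ℓ : ℤ) := by exact_mod_cast hℓ
      have hab2 : (a : ℤ) * ℓ = (b : ℤ) * ℓ := by linarith
      have := mul_right_cancel₀ (ne_of_gt hℓ') hab2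
      exact_mod_cast this
    calc h + 1 - j
        = (Finset.image (fun q : ℕ => v + (q : ℤ) * ℓ) (Finset.range (h + 1 - j))).card := by
          rw [Finset.card_image_of_injective _ hinjq, Finset.card_range]
      _ ≤ _ := Finset.card_le_card hsubimg
  -- total count
  set SJn : ℕ := ∑ ρ : ZMod ℓ, Nat.find (hex ρ) with hSJn
  have hsum : (h • A).card
      = ∑ ρ : ZMod ℓ, ((h • A).filter (fun x : ℤ => (x : ZMod ℓ) = ρ)).card :=
    Finset.card_eq_sum_card_fiberwise (fun x _ => Finset.mem_univ _)
  have hC1 : (ℓ : ℤ) * (h + 1) - (SJn : ℤ) ≤ ((h • A).card : ℤ) := by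
    have hterm : ∀ ρ : ZMod ℓ, ((h : ℤ) + 1) - (Nat.find (hex ρ) : ℤ)
        ≤ (((h • A).filter (fun x : ℤ => (x : ZMod ℓ) = ρ)).card : ℤ) := by
      intro ρ
      rcases le_or_gt (Nat.find (hex ρ)) h with hle | hlt
      · have h1 := hfiber ρ hle
        have hcast : ((h + 1 - Nat.find (hex ρ) : ℕ) : ℤ)
            = (h : ℤ) + 1 - (Nat.find (hex ρ) : ℤ) := by
          push_cast [Nat.cast_sub (by omega : Nat.find (hex ρ) ≤ h + 1)]
          ring
        rw [← hcast]
        exact_mod_cast h1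
      · have h2 : (h : ℤ) + 1 ≤ (Nat.find (hex ρ) : ℤ) := by exact_mod_cast hlt
        have h3 : (0 : ℤ) ≤ (((h • A).filter (fun x : ℤ => (x : ZMod ℓ) = ρ)).card : ℤ) := by
          exact Int.natCast_nonneg _
        linarith
    have hsum2 : (ℓ : ℤ) * (h + 1) - (SJn : ℤ)
        = ∑ ρ : ZMod ℓ, (((h : ℤ) + 1) - (Nat.find (hex ρ) : ℤ)) := by
      rw [Finset.sum_sub_distrib, Finset.sum_const, Finset.card_univ, ZMod.card]
      rw [hSJn]
      push_cast
      ring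
    rw [hsum2, hsum]
    push_cast
    exact Finset.sum_le_sum (fun ρ _ => hterm ρ)
  -- swap sum
  have hswap : SJn = ∑ j ∈ Finset.range ℓ, (ℓ - (j • Ab).card) := by
    have hstep1 : ∀ ρ : ZMod ℓ,
        (∑ j ∈ Finset.range ℓ, if j < Nat.find (hex ρ) then 1 else 0) = Nat.find (hex ρ) := by
      intro ρ
      rw [← Finset.card_filter]
      have hfe : (Finset.range ℓ).filter (fun j => j < Nat.find (hex ρ))
          = Finset.range (Nat.find (hex ρ)) := by
        ext j
        simp only [Finset.mem_filter, Finset.mem_range]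
        have := hjml ρ
        omega
      rw [hfe, Finset.card_range]
    have hstep3 : ∀ j : ℕ,
        (∑ ρ : ZMod ℓ, if j < Nat.find (hex ρ) then 1 else 0) = ℓ - (j • Ab).card := by
      intro j
      rw [← Finset.card_filter]
      have heq : Finset.univ.filter (fun ρ : ZMod ℓ => j < Nat.find (hex ρ))
          = Finset.univ \ (j • Ab) := by
        ext ρ
        simp only [Finset.mem_filter, Finset.mem_sdiff, Finset.mem_univ, true_and]
        constructor
        · intro h1 h2
          have := (hmemiff ρ j).mp h2
          omega
        · intro h1
          rcases Nat.lt_or_ge j (Nat.find (hex ρ)) with h2 | h2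
          · exact h2
          · exact absurd ((hmemiff ρ j).mpr h2) h1
      rw [heq, Finset.card_sdiff_of_subset (Finset.subset_univ _), Finset.card_univ, ZMod.card]
    calc SJn = ∑ ρ : ZMod ℓ, ∑ j ∈ Finset.range ℓ, if j < Nat.find (hex ρ) then 1 else 0 :=
          Finset.sum_congr rfl (fun ρ _ => (hstep1 ρ).symm)
      _ = ∑ j ∈ Finset.range ℓ, ∑ ρ : ZMod ℓ, if j < Nat.find (hex ρ) then 1 else 0 :=
          Finset.sum_comm
      _ = ∑ j ∈ Finset.range ℓ, (ℓ - (j • Ab).card) :=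
          Finset.sum_congr rfl (fun j _ => hstep3 j)
  -- deficit bound
  set Qn : ℕ := ∑ j ∈ Finset.range (ℓ - 1), (2 * ℓ - d * (j + 2)) with hQn
  have hdef : 2 * SJn ≤ 2 * (ℓ - 1) + Qn := by
    rw [hswap, LevAux.sum_split_first _ ℓ hℓ]
    have h0term : ℓ - (0 • Ab).card = ℓ - 1 := by
      rw [zero_nsmul]
      norm_num
    have hterm : ∀ j ∈ Finset.range (ℓ - 1),
        2 * (ℓ - ((j + 1) • Ab).card) ≤ 2 * ℓ - d * (j + 2) := by
      intro j _
      have hg := hgrow (j + 1) (by omega)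
      have hcl := hcardle (j + 1)
      have hdd2 : d * (j + 1 + 1) = d * (j + 2) := by ring
      rcases le_total (2 * ℓ) (d * (j + 1 + 1)) with hle | hle
      · rw [min_eq_left hle] at hg
        omega
      · rw [min_eq_right hle] at hg
        omega
    calc 2 * ((ℓ - (0 • Ab).card) + ∑ j ∈ Finset.range (ℓ - 1), (ℓ - ((j + 1) • Ab).card))
        = 2 * (ℓ - (0 • Ab).card)
          + ∑ j ∈ Finset.range (ℓ - 1), 2 * (ℓ - ((j + 1) • Ab).card) := by
          rw [Nat.mul_add, Finset.mul_sum]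
      _ ≤ 2 * (ℓ - 1) + Qn := by
          rw [h0term, hQn]
          exact Nat.add_le_add_left (Finset.sum_le_sum hterm) _
  have hq2 : 2 * d * Qn ≤ (2 * ℓ - d) ^ 2 := by
    have := LevAux.sum_deficit_bound ℓ d (ℓ - 1)
    rw [← hQn] at this
    omega
  -- integer inequality
  have hZ : ((d : ℤ) - 1) * (SJn : ℤ) ≤ ((d : ℤ) - 1) * ℓ + (ℓ : ℤ) ^ 2 := by
    have h1ℓ : 1 ≤ ℓ := hℓ
    have hd2ℓ : d ≤ 2 * ℓ := by omega
    have c1 : 2 * (SJn : ℤ) ≤ 2 * ((ℓ : ℤ) - 1) + (Qn : ℤ) := by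
      zify [h1ℓ] at hdef
      linarith
    have c2 : 2 * (d : ℤ) * (Qn : ℤ) ≤ (2 * (ℓ : ℤ) - (d : ℤ)) ^ 2 := by
      zify [hd2ℓ] at hq2
      linarith
    have hd2' : (2 : ℤ) ≤ (d : ℤ) := by exact_mod_cast hd2
    have hdl' : (d : ℤ) ≤ (ℓ : ℤ) := by exact_mod_cast hdl
    have hD0 : (0 : ℤ) ≤ (d : ℤ) := by linarith
    have hL0 : (0 : ℤ) ≤ (ℓ : ℤ) := by linarith
    have hLD : (0 : ℤ) ≤ (ℓ : ℤ) - (d : ℤ) := by linarith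
    have h4LD : (0 : ℤ) ≤ 4 * (ℓ : ℤ) - (d : ℤ) := by linarith
    have hc1' := mul_le_mul_of_nonneg_left c1
      (show (0 : ℤ) ≤ 2 * (d : ℤ) * ((d : ℤ) - 1) by nlinarith)
    have hc2' := mul_le_mul_of_nonneg_left c2 (show (0 : ℤ) ≤ (d : ℤ) - 1 by linarith)
    have polyineq : ((d : ℤ) - 1) * (2 * (ℓ : ℤ) - (d : ℤ)) ^ 2
        + 4 * (d : ℤ) * ((d : ℤ) - 1) * ((ℓ : ℤ) - 1)
        ≤ 4 * (d : ℤ) * (((d : ℤ) - 1) * (ℓ : ℤ) + (ℓ : ℤ) ^ 2) := by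
      nlinarith [mul_nonneg (mul_nonneg hD0 hD0) h4LD, mul_nonneg hL0 hLD,
        mul_le_mul_of_nonneg_left hd2' hD0]
    have hkey : 4 * (d : ℤ) * (((d : ℤ) - 1) * (SJn : ℤ))
        ≤ 4 * (d : ℤ) * (((d : ℤ) - 1) * ℓ + (ℓ : ℤ) ^ 2) := by
      linarith [hc1', hc2', polyineq]
    have h4d : (0 : ℤ) < 4 * (d : ℤ) := by linarith
    exact le_of_mul_le_mul_left hkey h4d
  -- real conclusion
  have hR1 : (ℓ : ℝ) * ((h : ℝ) + 1) - (SJn : ℝ) ≤ (((h • A).card : ℕ) : ℝ) := by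
    exact_mod_cast hC1
  have hZR : ((d : ℝ) - 1) * (SJn : ℝ) ≤ ((d : ℝ) - 1) * (ℓ : ℝ) + (ℓ : ℝ) ^ 2 := by
    exact_mod_cast hZ
  have hdpos : (0 : ℝ) < (d : ℝ) - 1 := by
    have : (2 : ℝ) ≤ (d : ℝ) := by exact_mod_cast hd2
    linarith
  have hSJle : (SJn : ℝ) ≤ (ℓ : ℝ) + (ℓ : ℝ) ^ 2 / ((d : ℝ) - 1) := by
    have h2 : (SJn : ℝ) ≤ (((d : ℝ) - 1) * (ℓ : ℝ) + (ℓ : ℝ) ^ 2) / ((d : ℝ) - 1) := by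
      rw [le_div_iff₀ hdpos]
      linarith [hZR]
    have h3 : (((d : ℝ) - 1) * (ℓ : ℝ) + (ℓ : ℝ) ^ 2) / ((d : ℝ) - 1)
        = (ℓ : ℝ) + (ℓ : ℝ) ^ 2 / ((d : ℝ) - 1) := by
      rw [add_div, mul_div_cancel_left₀ _ (ne_of_gt hdpos)]
    linarith [h2, h3.le, h3.ge]
  have hAc : ((A.card : ℝ) - 2) = (d : ℝ) - 1 := by
    have : ((d : ℝ) + 1) = (A.card : ℝ) := by exact_mod_cast hdcard
    linarith
  rw [ge_iff_le, hAc]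
  linarith [hR1, hSJle]
end

section
/- If A ⊆ [−ℓ,ℓ] ∩ ℤ is symmetric with 0, ℓ ∈ A and gcd(A\{0}) = 1, and m is a positive integer with m ≤ ℓ/2 and |A| > (2ℓ+1)/(m+1), then every integer z with |z| ≤ 2mℓ lies in the 20m-fold iterated sumset 20m·A. -/
open Pointwise Finset

set_option linter.unusedSectionVars false
set_option maxHeartbeats 1000000

variable {G : Type*} [AddCommGroup G] [Fintype G] [DecidableEq G]

lemma subset_add_right {F S : Finset G} (h0 : (0:G) ∈ S) : F ⊆ F + S := by
  intro x hx; exact Finset.mem_add.2 ⟨x, hx, 0, h0, add_zero x⟩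

lemma inter_add_subset (F F' S : Finset G) : (F ∩ F') + S ⊆ (F + S) ∩ (F' + S) := by
  intro x hx
  obtain ⟨y, hy, z, hz, rfl⟩ := Finset.mem_add.1 hx
  exact Finset.mem_inter.2 ⟨Finset.mem_add.2 ⟨y, (Finset.mem_inter.1 hy).1, z, hz, rfl⟩,
    Finset.mem_add.2 ⟨y, (Finset.mem_inter.1 hy).2, z, hz, rfl⟩⟩

lemma union_add_eq (F F' S : Finset G) : (F ∪ F') + S = (F + S) ∪ (F' + S) := by
  ext x
  simp only [Finset.mem_add, Finset.mem_union]
  constructor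
  · rintro ⟨y, hy | hy, z, hz, rfl⟩
    · exact Or.inl ⟨y, hy, z, hz, rfl⟩
    · exact Or.inr ⟨y, hy, z, hz, rfl⟩
  · rintro (⟨y, hy, z, hz, rfl⟩ | ⟨y, hy, z, hz, rfl⟩)
    · exact ⟨y, Or.inl hy, z, hz, rfl⟩
    · exact ⟨y, Or.inr hy, z, hz, rfl⟩

lemma submod (F F' S : Finset G) :
    ((F ∩ F') + S).card + ((F ∪ F') + S).card ≤ (F + S).card + (F' + S).card := by
  calc ((F ∩ F') + S).card + ((F ∪ F') + S).card
      ≤ ((F + S) ∩ (F' + S)).card + ((F + S) ∪ (F' + S)).card := by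
        refine Nat.add_le_add (Finset.card_le_card (inter_add_subset F F' S)) ?_
        rw [union_add_eq]
    _ = (F + S).card + (F' + S).card := Finset.card_inter_add_card_union _ _

lemma mem_singleton_add {c x : G} {T : Finset G} : x ∈ {c} + T ↔ x - c ∈ T := by
  simp only [Finset.mem_add, Finset.mem_singleton]
  constructor
  · rintro ⟨y, rfl, z, hz, rfl⟩; simpa using hz
  · intro h; exact ⟨c, rfl, x - c, h, by abel⟩

lemma cardSingletonAdd (c : G) (T : Finset G) : ({c} + T).card = T.card := by
  classical
  have : {c} + T = T.image (fun y => c + y) := by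
    ext x
    simp only [mem_singleton_add, Finset.mem_image]
    constructor
    · intro h; exact ⟨x - c, h, by abel⟩
    · rintro ⟨y, hy, rfl⟩; simpa using hy
  rw [this]
  exact Finset.card_image_of_injective _ (add_right_injective c)


-- boundary size: card (F+S) = card F + bdry
noncomputable def bdry (S F : Finset G) : ℕ := ((F + S) \ F).card

lemma card_add_bdry {S : Finset G} (h0 : (0:G) ∈ S) (F : Finset G) :
    (F + S).card = F.card + bdry S F := by
  rw [bdry, Finset.card_sdiff_of_subset (subset_add_right h0), Nat.add_sub_cancel' ]
  exact Finset.card_le_card (subset_add_right h0)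

section Frag

variable (S : Finset G)

def IsFrag (F : Finset G) : Prop := F.Nonempty ∧ F + S ≠ Finset.univ

variable {S}

-- complement of closure of a fragment is a fragment with no larger boundary
lemma compl_frag (h0 : (0:G) ∈ S) (hsym : ∀ s ∈ S, -s ∈ S) {F : Finset G}
    (hF : IsFrag S F) : IsFrag S ((F + S)ᶜ) ∧ bdry S ((F + S)ᶜ) ≤ bdry S F := by
  obtain ⟨hFne, hFS⟩ := hF
  set Fs := (F + S)ᶜ with hFs
  have hsub : Fs + S ⊆ Fᶜ := by
    intro x hx
    obtain ⟨y, hy, z, hz, rfl⟩ := Finset.mem_add.1 hx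
    rw [Finset.mem_compl]
    intro hmem
    have : y ∈ F + S := Finset.mem_add.2 ⟨y + z, hmem, -z, hsym z hz, by abel⟩
    exact (Finset.mem_compl.1 hy) this
  have hFsne : Fs.Nonempty := by
    rw [hFs, ← Finset.card_pos, Finset.card_compl]
    have : (F + S).card < Fintype.card G := by
      refine lt_of_le_of_ne (Finset.card_le_univ _) ?_
      intro h; exact hFS (Finset.eq_univ_of_card _ (by simpa using h))
    omega
  have hFsS : Fs + S ≠ Finset.univ := by
    intro h
    obtain ⟨x, hx⟩ := hFne
    have : x ∈ Fᶜ := hsub (h ▸ Finset.mem_univ x)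
    exact (Finset.mem_compl.1 this) hx
  refine ⟨⟨hFsne, hFsS⟩, ?_⟩
  -- cards
  have h1 : (Fs + S).card ≤ Fintype.card G - F.card := by
    have := Finset.card_le_card hsub
    rwa [Finset.card_compl] at this
  have h2 : Fs.card = Fintype.card G - (F + S).card := by rw [hFs, Finset.card_compl]
  have h3 := card_add_bdry h0 F
  have h4 := card_add_bdry h0 Fs
  have h5 : F.card ≤ Fintype.card G := Finset.card_le_univ F
  have h6 : (F + S).card ≤ Fintype.card G := Finset.card_le_univ _
  omega

end Frag

section Main

variable {S : Finset G}

theorem frag_bdry_ge (h0 : (0:G) ∈ S) (hsym : ∀ s ∈ S, -s ∈ S)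
    (hgen : AddSubgroup.closure (S : Set G) = ⊤)
    {F₀ : Finset G} (hF₀ : IsFrag S F₀) :
    2 * S.card ≤ 3 * bdry S F₀ := by
  classical
  -- minimal boundary via Nat.sInf
  set P : Set ℕ := {n | ∃ F, IsFrag S F ∧ bdry S F = n} with hP
  have hPne : P.Nonempty := ⟨bdry S F₀, F₀, hF₀, rfl⟩
  set β := sInf P with hβ
  obtain ⟨B, hBfrag, hBβ⟩ : ∃ F, IsFrag S F ∧ bdry S F = β := Nat.sInf_mem hPne
  have hBmin : ∀ F : Finset G, IsFrag S F → β ≤ bdry S F := by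
    intro F hF; exact Nat.sInf_le ⟨F, hF, rfl⟩
  -- among minimizers, minimal cardinality
  set Q : Set ℕ := {n | ∃ F, IsFrag S F ∧ bdry S F = β ∧ F.card = n} with hQ
  have hQne : Q.Nonempty := ⟨B.card, B, hBfrag, hBβ, rfl⟩
  obtain ⟨A₁, hA₁frag', hA₁β, hA₁card⟩ : ∃ F, IsFrag S F ∧ bdry S F = β ∧ F.card = sInf Q :=
    Nat.sInf_mem hQne
  have hA₁min : ∀ F : Finset G, IsFrag S F → bdry S F = β → A₁.card ≤ F.card := by
    intro F hF hFβ
    rw [hA₁card]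
    exact Nat.sInf_le ⟨F, hF, hFβ, rfl⟩
  -- translate to contain 0
  obtain ⟨a₀, ha₀⟩ := hA₁frag'.1
  set A := {-a₀} + A₁ with hA
  have transmem : ∀ (c : G) (T : Finset G) (x : G), x ∈ {c} + T ↔ x - c ∈ T :=
    fun c T x => mem_singleton_add
  have hA0 : (0:G) ∈ A := by rw [hA, mem_singleton_add]; simpa using ha₀
  have hAadd : A + S = {-a₀} + (A₁ + S) := by rw [hA, add_assoc]
  have hAcard : A.card = A₁.card := cardSingletonAdd _ _
  have hAScard : (A + S).card = (A₁ + S).card := by rw [hAadd]; exact cardSingletonAdd _ _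
  have hAfrag : IsFrag S A := by
    constructor
    · exact ⟨0, hA0⟩
    · intro h
      have : (A₁ + S).card = Fintype.card G := by
        rw [← hAScard, h]; simp
      exact hA₁frag'.2 (Finset.eq_univ_of_card _ this)
  have hAβ : bdry S A = β := by
    have h1 := card_add_bdry h0 A
    have h2 := card_add_bdry h0 A₁
    omega
  -- atom property: fragments have bdry ≥ β, minimizers have card ≥ A.card
  have bdry_ge : ∀ {F : Finset G}, IsFrag S F → β ≤ bdry S F := fun hF => hBmin _ hF
  have card_ge : ∀ {F : Finset G}, IsFrag S F → bdry S F = β → A.card ≤ F.card := by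
    intro F hF hFβ
    rw [hAcard]
    exact hA₁min F hF hFβ
  -- key: A is stabilized by its own elements
  have hstab : ∀ a ∈ A, {a} + A = A := by
    intro a ha
    have haA : IsFrag S ({a} + A) := by
      constructor
      · exact ⟨a + 0, by rw [mem_singleton_add]; simpa using hA0⟩
      · intro h
        have : (A + S).card = Fintype.card G := by
          have e : ({a} + A) + S = {a} + (A + S) := add_assoc _ _ _
          calc (A + S).card = ({a} + (A + S)).card := (cardSingletonAdd _ _).symm
            _ = (({a} + A) + S).card := by rw [e]
            _ = Fintype.card G := by rw [h]; simp
        exact hAfrag.2 (Finset.eq_univ_of_card _ this)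
    have haAcard : ({a} + A).card = A.card := cardSingletonAdd _ _
    have haAS : (({a} + A) + S).card = (A + S).card := by
      rw [add_assoc]; exact cardSingletonAdd _ _
    have haAβ : bdry S ({a} + A) = β := by
      have h1 := card_add_bdry h0 ({a} + A)
      have h2 := card_add_bdry h0 A
      omega
    have hIne : (A ∩ ({a} + A)).Nonempty := by
      refine ⟨a, Finset.mem_inter.2 ⟨ha, ?_⟩⟩
      rw [mem_singleton_add]; simpa using hA0
    have hISsub : (A ∩ ({a} + A)) + S ⊆ A + S :=
      Finset.add_subset_add_right (Finset.inter_subset_left)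
    have hISne : (A ∩ ({a} + A)) + S ≠ Finset.univ := by
      intro h
      refine hAfrag.2 (Finset.eq_univ_of_forall fun x => ?_)
      exact hISsub (h ▸ Finset.mem_univ x)
    have hIfrag : IsFrag S (A ∩ ({a} + A)) := ⟨hIne, hISne⟩
    have hIβ : β ≤ bdry S (A ∩ ({a} + A)) := bdry_ge hIfrag
    by_cases hUS : (A ∪ ({a} + A)) + S = Finset.univ
    · -- contradiction via complement atom
      exfalso
      obtain ⟨hAcfrag, hAcβ⟩ := compl_frag h0 hsym hAfrag
      rw [hAβ] at hAcβ
      have hAcβ' : bdry S ((A + S)ᶜ) = β := le_antisymm hAcβ (bdry_ge hAcfrag)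
      have hAccard : A.card ≤ ((A + S)ᶜ).card := card_ge hAcfrag hAcβ'
      have hUcard : ((A + S) ∪ (({a} + A) + S)).card = Fintype.card G := by
        rw [← union_add_eq, hUS]; simp
      have hcui := Finset.card_inter_add_card_union (A + S) (({a} + A) + S)
      have hIcard : (A ∩ ({a} + A)).card + bdry S (A ∩ ({a} + A))
          ≤ ((A + S) ∩ (({a} + A) + S)).card := by
        rw [← card_add_bdry h0]; exact Finset.card_le_card (inter_add_subset _ _ _)
      have hcompl : ((A + S)ᶜ).card = Fintype.card G - (A + S).card := Finset.card_compl _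
      have hAS := card_add_bdry h0 A
      have hN : (A + S).card ≤ Fintype.card G := Finset.card_le_univ _
      have hIpos : 1 ≤ (A ∩ ({a} + A)).card := hIne.card_pos
      omega
    · -- submodularity case
      have hUfrag : IsFrag S (A ∪ ({a} + A)) := ⟨⟨a, Finset.mem_union.2 (Or.inl ha)⟩, hUS⟩
      have hUβ : β ≤ bdry S (A ∪ ({a} + A)) := bdry_ge hUfrag
      have hsubm := submod A ({a} + A) S
      have hIU := Finset.card_inter_add_card_union A ({a} + A)
      have e1 := card_add_bdry h0 A
      have e2 := card_add_bdry h0 ({a} + A)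
      have e3 := card_add_bdry h0 (A ∩ ({a} + A))
      have e4 := card_add_bdry h0 (A ∪ ({a} + A))
      have hIβ' : bdry S (A ∩ ({a} + A)) = β := by omega
      have hIcard : A.card ≤ (A ∩ ({a} + A)).card := card_ge hIfrag hIβ'
      have hIA : A ∩ ({a} + A) = A :=
        Finset.eq_of_subset_of_card_le Finset.inter_subset_left hIcard
      have hsub2 : A ⊆ {a} + A := by
        have h2 : A ∩ ({a} + A) ⊆ {a} + A := Finset.inter_subset_right
        rwa [hIA] at h2
      exact (Finset.eq_of_subset_of_card_le hsub2 (le_of_eq haAcard)).symm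
  -- A is closed under addition
  have hKadd : ∀ a ∈ A, ∀ b ∈ A, a + b ∈ A := by
    intro a ha b hb
    have h := hstab a ha
    rw [← h, mem_singleton_add]
    simpa using hb
  have hKnsmul : ∀ (n : ℕ), ∀ a ∈ A, n • a ∈ A := by
    intro n
    induction n with
    | zero => intro a _; simpa using hA0
    | succ k ih =>
      intro a ha
      rw [succ_nsmul]
      exact hKadd _ (ih a ha) _ ha
  have hKneg : ∀ a ∈ A, -a ∈ A := by
    intro a ha
    have hpos : 0 < addOrderOf a := addOrderOf_pos a
    have h1 : addOrderOf a • a = 0 := addOrderOf_nsmul_eq_zero a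
    have h2 : (addOrderOf a - 1) • a + a = 0 := by
      rw [← succ_nsmul]
      have e : addOrderOf a - 1 + 1 = addOrderOf a := by omega
      rw [e]
      exact h1
    have h3 : (addOrderOf a - 1) • a = -a := eq_neg_of_add_eq_zero_left h2
    rw [← h3]
    exact hKnsmul _ a ha
  have hKsub : ∀ a ∈ A, ∀ b ∈ A, a - b ∈ A := by
    intro a ha b hb
    rw [sub_eq_add_neg]
    exact hKadd _ ha _ (hKneg _ hb)
  -- T := A + S
  have hTne : A + S ≠ Finset.univ := hAfrag.2
  have hKT : A ⊆ A + S := subset_add_right h0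
  have hST : S ⊆ A + S := fun s hs => Finset.mem_add.2 ⟨0, hA0, s, hs, zero_add s⟩
  have hcosetT : ∀ x ∈ S, {x} + A ⊆ A + S := by
    intro x hx y hy
    rw [mem_singleton_add] at hy
    exact Finset.mem_add.2 ⟨y - x, hy, x, hx, by abel⟩
  have hdisj : ∀ x y : G, x - y ∉ A → Disjoint ({x} + A) ({y} + A) := by
    intro x y hxy
    rw [Finset.disjoint_left]
    intro z hzx hzy
    rw [mem_singleton_add] at hzx hzy
    refine hxy ?_
    have h := hKsub _ hzy _ hzx
    have e : (z - y) - (z - x) = x - y := by abel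
    rwa [e] at h
  have hdisj0 : ∀ x : G, x ∉ A → Disjoint A ({x} + A) := by
    intro x hx
    rw [Finset.disjoint_left]
    intro z hz hzx
    rw [mem_singleton_add] at hzx
    refine hx ?_
    have h := hKsub _ hz _ hzx
    have e : z - (z - x) = x := by abel
    rwa [e] at h
  -- there is s₁ ∈ S with s₁ ∉ A
  obtain ⟨s₁, hs₁S, hs₁A⟩ : ∃ s₁ ∈ S, s₁ ∉ A := by
    by_contra hcon
    push_neg at hcon
    set KG : AddSubgroup G :=
      { carrier := ↑A
        add_mem' := fun {x y} hx hy => hKadd x hx y hy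
        zero_mem' := hA0
        neg_mem' := fun {x} hx => hKneg x hx } with hKG
    have hle : AddSubgroup.closure (S : Set G) ≤ KG :=
      (AddSubgroup.closure_le KG).2 (fun x hx => hcon x hx)
    rw [hgen] at hle
    refine hTne (Finset.eq_univ_of_forall fun x => hKT ?_)
    exact hle (AddSubgroup.mem_top x)
  -- counting : (A+S).card ≥ 3 A.card
  have hTcard : 3 * A.card ≤ (A + S).card := by
    have cardsum : ∀ X Y Z : Finset G, Disjoint X Y → Disjoint X Z → Disjoint Y Z →
        X ⊆ A + S → Y ⊆ A + S → Z ⊆ A + S →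
        X.card + Y.card + Z.card ≤ (A + S).card := by
      intro X Y Z hXY hXZ hYZ hXT hYT hZT
      have hd : Disjoint (X ∪ Y) Z := Finset.disjoint_union_left.2 ⟨hXZ, hYZ⟩
      calc X.card + Y.card + Z.card = (X ∪ Y).card + Z.card := by
            rw [Finset.card_union_of_disjoint hXY]
        _ = ((X ∪ Y) ∪ Z).card := (Finset.card_union_of_disjoint hd).symm
        _ ≤ (A + S).card := Finset.card_le_card (by
            intro x hx
            rcases Finset.mem_union.1 hx with h | h
            · rcases Finset.mem_union.1 h with h' | h'
              · exact hXT h'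
              · exact hYT h'
            · exact hZT h)
    by_cases h2 : s₁ + s₁ ∈ A
    · by_cases hex : ∃ s₂ ∈ S, s₂ ∉ A ∧ s₂ - s₁ ∉ A
      · obtain ⟨s₂, hs₂S, hs₂A, hs₂s₁⟩ := hex
        have d1 : Disjoint A ({s₁} + A) := hdisj0 _ hs₁A
        have d2 : Disjoint A ({s₂} + A) := hdisj0 _ hs₂A
        have d3 : Disjoint ({s₁} + A) ({s₂} + A) := (hdisj s₂ s₁ hs₂s₁).symm
        have hcs := cardsum A ({s₁} + A) ({s₂} + A) d1 d2 d3 hKT (hcosetT _ hs₁S)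
          (hcosetT _ hs₂S)
        have c1 : ({s₁} + A).card = A.card := cardSingletonAdd _ _
        have c2 : ({s₂} + A).card = A.card := cardSingletonAdd _ _
        omega
      · exfalso
        push_neg at hex
        set MG : AddSubgroup G :=
          { carrier := ↑(A ∪ ({s₁} + A))
            add_mem' := by
              intro x y hx hy
              simp only [Finset.coe_union, Set.mem_union, Finset.mem_coe,
                mem_singleton_add] at hx hy ⊢
              rcases hx with hx | hx <;> rcases hy with hy | hy
              · exact Or.inl (hKadd _ hx _ hy)
              · refine Or.inr ?_
                have e : x + y - s₁ = x + (y - s₁) := by abel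
                rw [e]
                exact hKadd _ hx _ hy
              · refine Or.inr ?_
                have e : x + y - s₁ = y + (x - s₁) := by abel
                rw [e]
                exact hKadd _ hy _ hx
              · refine Or.inl ?_
                have e : x + y = (s₁ + s₁) + ((x - s₁) + (y - s₁)) := by abel
                rw [e]
                exact hKadd _ h2 _ (hKadd _ hx _ hy)
            zero_mem' := by
              simp only [Finset.coe_union, Set.mem_union, Finset.mem_coe]
              exact Or.inl hA0
            neg_mem' := by
              intro x hx
              simp only [Finset.coe_union, Set.mem_union, Finset.mem_coe,
                mem_singleton_add] at hx ⊢
              rcases hx with hx | hx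
              · exact Or.inl (hKneg _ hx)
              · refine Or.inr ?_
                have e : -x - s₁ = -((s₁ + s₁) + (x - s₁)) := by abel
                rw [e]
                exact hKneg _ (hKadd _ h2 _ hx)
          } with hMG
        have hle : AddSubgroup.closure (S : Set G) ≤ MG := by
          refine (AddSubgroup.closure_le MG).2 (fun x hx => ?_)
          simp only [SetLike.mem_coe, hMG, AddSubgroup.mem_mk, AddSubmonoid.mem_mk,
            AddSubsemigroup.mem_mk, Finset.coe_union, Set.mem_union, Finset.mem_coe,
            Finset.mem_union, mem_singleton_add]
          rw [Finset.mem_coe] at hx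
          by_cases hxA : x ∈ A
          · exact Or.inl hxA
          · exact Or.inr (hex x hx hxA)
        rw [hgen] at hle
        refine hTne (Finset.eq_univ_of_forall fun x => ?_)
        have hx : x ∈ MG := hle (AddSubgroup.mem_top x)
        simp only [hMG, AddSubgroup.mem_mk, AddSubmonoid.mem_mk, AddSubsemigroup.mem_mk] at hx
        simp only [Finset.coe_union, Set.mem_union, Finset.mem_coe] at hx
        rcases hx with hx | hx
        · exact hKT hx
        · exact hcosetT _ hs₁S hx
    · -- s₁ + s₁ ∉ A : use cosets A, {s₁}+A, {-s₁}+A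
      have hns₁A : -s₁ ∉ A := fun h => hs₁A (by simpa using hKneg _ h)
      have d1 : Disjoint A ({s₁} + A) := hdisj0 _ hs₁A
      have d2 : Disjoint A ({-s₁} + A) := hdisj0 _ hns₁A
      have d3 : Disjoint ({s₁} + A) ({-s₁} + A) := by
        refine hdisj s₁ (-s₁) ?_
        have e : s₁ - -s₁ = s₁ + s₁ := by abel
        rw [e]; exact h2
      have hcs := cardsum A ({s₁} + A) ({-s₁} + A) d1 d2 d3 hKT (hcosetT _ hs₁S)
        (hcosetT _ (hsym _ hs₁S))
      have c1 : ({s₁} + A).card = A.card := cardSingletonAdd _ _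
      have c2 : ({-s₁} + A).card = A.card := cardSingletonAdd _ _
      omega
  -- conclude
  have hAS := card_add_bdry h0 A
  have hSsubT : S.card ≤ (A + S).card := Finset.card_le_card hST
  have hfin := bdry_ge hF₀
  omega

end Main

section Cover

variable {S : Finset G}

theorem add_growth (h0 : (0:G) ∈ S) (hsym : ∀ s ∈ S, -s ∈ S)
    (hgen : AddSubgroup.closure (S : Set G) = ⊤)
    (X : Finset G) (hX : X.Nonempty) (hXS : X + S ≠ Finset.univ) :
    3 * X.card + 2 * S.card ≤ 3 * (X + S).card := by
  have h := frag_bdry_ge h0 hsym hgen ⟨hX, hXS⟩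
  have h2 := card_add_bdry h0 X
  omega

lemma zero_mem_nsmul (h0 : (0:G) ∈ S) : ∀ j : ℕ, (0:G) ∈ (j + 1) • S := by
  intro j
  induction j with
  | zero => rw [one_nsmul]; exact h0
  | succ k ih =>
    rw [succ_nsmul]
    exact Finset.mem_add.2 ⟨0, ih, 0, h0, add_zero 0⟩

lemma nsmul_card_ge (h0 : (0:G) ∈ S) (hsym : ∀ s ∈ S, -s ∈ S)
    (hgen : AddSubgroup.closure (S : Set G) = ⊤) :
    ∀ j : ℕ, min (3 * Fintype.card G) ((2 * j + 3) * S.card) ≤ 3 * ((j + 1) • S).card := by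
  intro j
  induction j with
  | zero => rw [one_nsmul]; exact le_trans (min_le_right _ _) (by omega)
  | succ k ih =>
    rw [succ_nsmul]
    by_cases h : (k + 1) • S + S = Finset.univ
    · rw [h]
      refine le_trans (min_le_left _ _) ?_
      rw [Finset.card_univ]
    · have hne : ((k + 1) • S).Nonempty := ⟨0, zero_mem_nsmul h0 k⟩
      have hg := add_growth h0 hsym hgen ((k + 1) • S) hne h
      rcases le_or_gt (3 * Fintype.card G) ((2 * k + 3) * S.card) with hc | hc
      · -- min was 3N : then (k+1)•S = univ, contradiction with h
        exfalso
        have hcard : Fintype.card G ≤ ((k + 1) • S).card := by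
          rw [min_eq_left hc] at ih
          omega
        have huniv : (k + 1) • S = Finset.univ :=
          Finset.eq_univ_of_card _ (le_antisymm (Finset.card_le_univ _) hcard)
        refine h (le_antisymm (Finset.subset_univ _) ?_)
        intro x _
        have hx : x ∈ (k + 1) • S := by rw [huniv]; exact Finset.mem_univ x
        exact subset_add_right h0 hx
      · have h1 : (2 * k + 3) * S.card ≤ 3 * ((k + 1) • S).card := by
          have := min_le_right (3 * Fintype.card G) ((2 * k + 3) * S.card)
          omega
        refine le_trans (min_le_right _ _) ?_
        have : (2 * (k + 1) + 3) * S.card = (2 * k + 3) * S.card + 2 * S.card := by ring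
        omega

theorem nsmul_eq_univ (h0 : (0:G) ∈ S) (hsym : ∀ s ∈ S, -s ∈ S)
    (hgen : AddSubgroup.closure (S : Set G) = ⊤)
    (J : ℕ) (hJ : 3 * Fintype.card G ≤ (2 * J + 3) * S.card) :
    (J + 1) • S = Finset.univ := by
  have h := nsmul_card_ge h0 hsym hgen J
  rw [min_eq_left hJ] at h
  exact Finset.eq_univ_of_card _ (le_antisymm (Finset.card_le_univ _) (by omega))

end Cover

/-! ### Interface lemmas -/

section Lists

lemma listsum_mem_nsmul {M : Type*} [AddCommMonoid M] [DecidableEq M] (A : Finset M) :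
    ∀ (l : List M), (∀ x ∈ l, x ∈ A) → l.sum ∈ l.length • A := by
  intro l
  induction l with
  | nil => intro _; simp [Finset.mem_zero]
  | cons a l ih =>
    intro h
    have ha : a ∈ A := h a List.mem_cons_self
    have hl := ih (fun x hx => h x (List.mem_cons_of_mem a hx))
    rw [List.length_cons, List.sum_cons, succ_nsmul]
    exact Finset.mem_add.2 ⟨l.sum, hl, a, ha, by rw [add_comm]⟩

lemma exists_list_of_mem_nsmul {M : Type*} [AddCommMonoid M] [DecidableEq M] {A : Finset M} :
    ∀ {n : ℕ} {x : M}, x ∈ n • A → ∃ l : List M, l.length = n ∧ (∀ y ∈ l, y ∈ A) ∧ l.sum = x := by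
  intro n
  induction n with
  | zero =>
    intro x hx
    rw [zero_nsmul, Finset.mem_zero] at hx
    exact ⟨[], rfl, by simp, by simp [hx]⟩
  | succ k ih =>
    intro x hx
    rw [succ_nsmul] at hx
    obtain ⟨y, hy, a, ha, rfl⟩ := Finset.mem_add.1 hx
    obtain ⟨l, hlen, hmem, hsum⟩ := ih hy
    refine ⟨a :: l, by simp [hlen], ?_, by simp [hsum, add_comm]⟩
    intro z hz
    rcases List.mem_cons.1 hz with rfl | hz
    · exact ha
    · exact hmem z hz

lemma listsum_abs_le (C : ℤ) : ∀ (l : List ℤ), (∀ x ∈ l, |x| ≤ C) → |l.sum| ≤ l.length * C := by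
  intro l
  induction l with
  | nil => intro _; simp
  | cons a l ih =>
    intro h
    have ha : |a| ≤ C := h a List.mem_cons_self
    have hl := ih (fun x hx => h x (List.mem_cons_of_mem a hx))
    rw [List.sum_cons, List.length_cons]
    calc |a + l.sum| ≤ |a| + |l.sum| := abs_add_le _ _
      _ ≤ C + l.length * C := add_le_add ha hl
      _ = (l.length + 1) * C := by ring
    
end Lists

section Gcd

lemma gcd_mem_closure (s : Finset ℤ) : (s.gcd id) ∈ AddSubgroup.closure (s : Set ℤ) := by
  classical
  induction s using Finset.induction_on with
  | empty => simp [Finset.gcd_empty]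
  | @insert a s ha ih =>
    rw [Finset.gcd_insert]
    have hmem_a : (a : ℤ) ∈ AddSubgroup.closure ((insert a s : Finset ℤ) : Set ℤ) :=
      AddSubgroup.subset_closure (by simp)
    have hmem_g : (s.gcd id) ∈ AddSubgroup.closure ((insert a s : Finset ℤ) : Set ℤ) := by
      refine AddSubgroup.closure_mono ?_ ih
      intro x hx
      simp only [Finset.coe_insert, Set.mem_insert_iff]
      exact Or.inr hx
    -- Bezout
    have hbz : GCDMonoid.gcd (id a) (s.gcd id) =
        (id a) * Int.gcdA (id a) (s.gcd id) + (s.gcd id) * Int.gcdB (id a) (s.gcd id) := by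
      rw [← Int.gcd_eq_gcd_ab]
      simp [Int.coe_gcd]
    rw [hbz]
    refine AddSubgroup.add_mem _ ?_ ?_
    · have := AddSubgroup.zsmul_mem _ hmem_a (Int.gcdA (id a) (s.gcd id))
      simpa [zsmul_eq_mul, mul_comm] using this
    · have := AddSubgroup.zsmul_mem _ hmem_g (Int.gcdB (id a) (s.gcd id))
      simpa [zsmul_eq_mul, mul_comm] using this

end Gcd

/-! ### Main theorem -/

theorem interval_in_iterated_sumset (ℓ m : ℕ) (hm : 0 < m) (hmℓ : 2 * m ≤ ℓ)
    (A : Finset ℤ) (hsub : A ⊆ Finset.Icc (-(ℓ : ℤ)) ℓ)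
    (h0 : (0 : ℤ) ∈ A) (hℓA : (ℓ : ℤ) ∈ A) (hsym : A = -A)
    (hgcd : (A.erase 0).gcd id = 1)
    (hcard : ((A.card : ℝ)) > (2 * ℓ + 1) / (m + 1)) :
    ∀ z : ℤ, |z| ≤ 2 * m * ℓ → z ∈ (20 * m) • A := by
  classical
  intro z hz
  haveI : NeZero ℓ := ⟨by omega⟩
  have hℓ2 : 2 ≤ ℓ := by omega
  -- elements of A are bounded by ℓ
  have habs : ∀ a ∈ A, |a| ≤ (ℓ : ℤ) := by
    intro a ha
    have := hsub ha
    rw [Finset.mem_Icc] at this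
    rw [abs_le]
    exact this
  -- A is closed under negation
  have negmem : ∀ a ∈ A, -a ∈ A := by
    intro a ha
    rw [hsym, Finset.mem_neg]
    exact ⟨a, ha, rfl⟩
  -- counting: (m+1) * |A| ≥ 2ℓ + 2
  have hA2 : 2 * ℓ + 2 ≤ (m + 1) * A.card := by
    have hm1 : (0:ℝ) < (m:ℝ) + 1 := by positivity
    rw [gt_iff_lt, div_lt_iff₀ hm1] at hcard
    have hr : ((2 * ℓ + 1 : ℕ) : ℝ) < ((A.card * (m + 1) : ℕ) : ℝ) := by push_cast; linarith
    have hn := Nat.cast_lt.mp hr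
    rw [mul_comm (A.card) (m+1)] at hn
    omega
  -- the image S in ZMod ℓ
  set S : Finset (ZMod ℓ) := A.image (fun a : ℤ => (a : ZMod ℓ)) with hS
  have h0S : (0 : ZMod ℓ) ∈ S := Finset.mem_image.2 ⟨0, h0, by simp⟩
  have hsymS : ∀ s ∈ S, -s ∈ S := by
    intro s hs
    obtain ⟨a, ha, rfl⟩ := Finset.mem_image.1 hs
    exact Finset.mem_image.2 ⟨-a, negmem a ha, by push_cast; ring⟩
  -- S generates ZMod ℓ
  have hgenS : AddSubgroup.closure (S : Set (ZMod ℓ)) = ⊤ := by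
    have h1 : (1 : ℤ) ∈ AddSubgroup.closure ((A.erase 0 : Finset ℤ) : Set ℤ) := by
      have := gcd_mem_closure (A.erase 0)
      rwa [hgcd] at this
    have h1' : (1 : ℤ) ∈ AddSubgroup.closure ((A : Finset ℤ) : Set ℤ) := by
      refine AddSubgroup.closure_mono ?_ h1
      exact_mod_cast Finset.erase_subset _ _
    have hmap : (1 : ZMod ℓ) ∈ AddSubgroup.closure (S : Set (ZMod ℓ)) := by
      have := AddSubgroup.mem_map_of_mem (Int.castAddHom (ZMod ℓ)) h1'
      rw [AddMonoidHom.map_closure] at this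
      have heq : (Int.castAddHom (ZMod ℓ)) '' (A : Set ℤ) = (S : Set (ZMod ℓ)) := by
        rw [hS, Finset.coe_image]
        rfl
      rw [heq] at this
      simpa using this
    rw [eq_top_iff]
    intro x _
    have hx : ((x.val : ℕ) : ZMod ℓ) = x := ZMod.natCast_rightInverse x
    rw [← hx]
    have : ((x.val : ℕ) : ZMod ℓ) = x.val • (1 : ZMod ℓ) := by
      rw [nsmul_eq_mul, mul_one]
    rw [this]
    exact AddSubgroup.nsmul_mem _ hmap _
  -- cardinality of S
  set σ := S.card with hσ
  have hkey : 2 * ℓ + 2 ≤ (m + 1) * (2 * σ + 1) := by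
    -- |A| ≤ 2σ + 1
    have hAσ : A.card ≤ 2 * σ + 1 := by
      set pos := A.filter (fun x : ℤ => 0 < x) with hpos
      set nonneg := A.filter (fun x : ℤ => 0 ≤ x) with hnonneg
      set neg := A.filter (fun x : ℤ => x < 0) with hneg
      have hsplit : nonneg.card + neg.card = A.card := by
        rw [hnonneg, hneg]
        have := Finset.card_filter_add_card_filter_not (s := A)
          (p := fun x : ℤ => 0 ≤ x)
        simp only [not_le] at this
        exact this
      have hnegpos : neg.card = pos.card := by
        have himg : neg.image (fun x : ℤ => -x) = pos := by
          ext y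
          simp only [hneg, hpos, Finset.mem_image, Finset.mem_filter]
          constructor
          · rintro ⟨x, ⟨hxA, hx⟩, rfl⟩
            exact ⟨negmem x hxA, by omega⟩
          · intro ⟨hyA, hy⟩
            exact ⟨-y, ⟨negmem y hyA, by omega⟩, by omega⟩
        rw [← himg]
        exact (Finset.card_image_of_injective _ neg_injective).symm
      have hposnn : pos.card + 1 = nonneg.card := by
        have herase : nonneg.erase 0 = pos := by
          ext x
          simp only [hpos, hnonneg, Finset.mem_erase, Finset.mem_filter]
          constructor
          · rintro ⟨hne, hxA, hx⟩; exact ⟨hxA, by omega⟩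
          · rintro ⟨hxA, hx⟩; exact ⟨by omega, hxA, by omega⟩
        have h0nn : (0:ℤ) ∈ nonneg := Finset.mem_filter.2 ⟨h0, le_refl 0⟩
        have he1 := Finset.card_erase_of_mem h0nn
        rw [herase] at he1
        have he2 : nonneg.card ≠ 0 := Finset.card_ne_zero_of_mem h0nn
        have he3 : 1 ≤ nonneg.card := Nat.one_le_iff_ne_zero.2 he2
        omega
      -- σ ≥ nonneg.card - 1 via injectivity on [0, ℓ)
      have hD : nonneg.card ≤ σ + 1 := by
        set D := nonneg.erase (ℓ : ℤ) with hDdef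
        have hDcard : D.card + 1 = nonneg.card := by
          have hℓnn : (ℓ:ℤ) ∈ nonneg := Finset.mem_filter.2 ⟨hℓA, by positivity⟩
          have he1 := Finset.card_erase_of_mem hℓnn
          rw [← hDdef] at he1
          have he2 : 1 ≤ nonneg.card := Nat.one_le_iff_ne_zero.2 (Finset.card_ne_zero_of_mem hℓnn)
          omega
        have hinj : Set.InjOn (fun a : ℤ => (a : ZMod ℓ)) D := by
          intro a ha b hb hab
          simp only [hDdef, hnonneg, Finset.coe_erase, Set.mem_diff, Finset.coe_filter,
            Set.mem_setOf_eq, Set.mem_singleton_iff] at ha hb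
          have hdvd : (ℓ : ℤ) ∣ a - b := by
            rw [← ZMod.intCast_zmod_eq_zero_iff_dvd]
            push_cast
            rw [sub_eq_zero]
            exact hab
          have haℓ : a ≤ (ℓ:ℤ) := by
            have := hsub ha.1.1; rw [Finset.mem_Icc] at this; exact this.2
          have hbℓ : b ≤ (ℓ:ℤ) := by
            have := hsub hb.1.1; rw [Finset.mem_Icc] at this; exact this.2
          have ha' : a < (ℓ:ℤ) := lt_of_le_of_ne haℓ ha.2
          have hb' : b < (ℓ:ℤ) := lt_of_le_of_ne hbℓ hb.2
          obtain ⟨c, hc⟩ := hdvd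
          have h1 : 0 ≤ a := ha.1.2
          have h2 : 0 ≤ b := hb.1.2
          have hcz : c = 0 := by
            rcases lt_trichotomy c 0 with h | h | h
            · nlinarith [hc]
            · exact h
            · nlinarith [hc]
          rw [hcz, mul_zero] at hc
          omega
        have hDim : D.card = (D.image (fun a : ℤ => (a : ZMod ℓ))).card :=
          (Finset.card_image_of_injOn hinj).symm
        have hsubS : D.image (fun a : ℤ => (a : ZMod ℓ)) ⊆ S := by
          refine Finset.image_subset_image ?_
          intro x hx
          simp only [hDdef, hnonneg, Finset.mem_erase, Finset.mem_filter] at hx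
          exact hx.2.1
        have hfin := Finset.card_le_card hsubS
        omega
      omega
    calc 2 * ℓ + 2 ≤ (m + 1) * A.card := hA2
      _ ≤ (m + 1) * (2 * σ + 1) := Nat.mul_le_mul_left _ hAσ
  -- covering: (2m+3) • S = univ
  have hcover : (2 * m + 2 + 1) • S = Finset.univ := by
    refine nsmul_eq_univ h0S hsymS hgenS (2 * m + 2) ?_
    rw [ZMod.card]
    -- 3ℓ ≤ (4m+7)σ
    have hstep : 6 * ℓ * (m + 1) + (4 * m + 7) * (m + 1) ≤ (4 * m + 7) * (2 * ℓ + 2) := by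
      nlinarith [hmℓ, hm]
    have hstep2 : (4 * m + 7) * (2 * ℓ + 2) ≤ (4 * m + 7) * ((m + 1) * (2 * σ + 1)) :=
      Nat.mul_le_mul_left _ hkey
    have hfinal : (2 * (m + 1)) * (3 * ℓ) ≤ (2 * (m + 1)) * ((2 * (2 * m + 2) + 3) * σ) := by
      nlinarith [hstep, hstep2]
    exact Nat.le_of_mul_le_mul_left hfinal (by omega)
  have hcover3 : (2 * m + 3) • S = Finset.univ := by
    have h23 : 2 * m + 3 = 2 * m + 2 + 1 := by omega
    rw [h23]; exact hcover
  -- decompose (z : ZMod ℓ) as a sum of 2m+3 elements of S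
  have hzS : ((z : ZMod ℓ)) ∈ (2 * m + 3) • S := by
    rw [hcover3]; exact Finset.mem_univ _
  obtain ⟨ls, hlen, hmem, hsum⟩ := exists_list_of_mem_nsmul hzS
  -- lift to a list of integers in A
  have hlift : ∀ l : List (ZMod ℓ), (∀ y ∈ l, y ∈ S) →
      ∃ l' : List ℤ, l'.length = l.length ∧ (∀ x ∈ l', x ∈ A) ∧
        ((l'.sum : ℤ) : ZMod ℓ) = l.sum := by
    intro l
    induction l with
    | nil => intro _; exact ⟨[], rfl, by simp, by simp⟩
    | cons a l ih =>
      intro h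
      obtain ⟨l', hlen', hmem', hsum'⟩ := ih (fun y hy => h y (List.mem_cons_of_mem a hy))
      obtain ⟨b, hbA, hba⟩ := Finset.mem_image.1 (h a List.mem_cons_self)
      refine ⟨b :: l', by simp [hlen'], ?_, by
        rw [List.sum_cons, List.sum_cons, Int.cast_add, hsum', hba]⟩
      intro x hx
      rcases List.mem_cons.1 hx with rfl | hx
      · exact hbA
      · exact hmem' x hx
  obtain ⟨l', hlen', hmem', hsum'⟩ := hlift ls hmem
  set w := l'.sum with hw
  -- ℓ divides z - w
  have hdvd : (ℓ : ℤ) ∣ z - w := by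
    rw [← ZMod.intCast_zmod_eq_zero_iff_dvd]
    push_cast
    rw [sub_eq_zero, hsum', hsum]
  obtain ⟨e, he⟩ := hdvd
  -- |w| ≤ (2m+3)ℓ
  have hwabs : |w| ≤ ((2 * m + 3 : ℕ) : ℤ) * ℓ := by
    have hws := listsum_abs_le (ℓ : ℤ) l' (fun x hx => habs x (hmem' x hx))
    rw [hlen', hlen] at hws
    exact_mod_cast hws
  -- |e| ≤ 4m + 3
  have heabs : e.natAbs ≤ 4 * m + 3 := by
    have h1 : |z - w| ≤ ((4 * m + 3 : ℕ) : ℤ) * ℓ := by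
      calc |z - w| ≤ |z| + |w| := abs_sub _ _
        _ ≤ 2 * m * ℓ + ((2 * m + 3 : ℕ) : ℤ) * ℓ := add_le_add hz hwabs
        _ = ((4 * m + 3 : ℕ) : ℤ) * ℓ := by push_cast; ring
    rw [he] at h1
    have hℓpos : (0:ℤ) < (ℓ:ℤ) := by exact_mod_cast (by omega : 0 < ℓ)
    have h2 : |(ℓ:ℤ) * e| = (ℓ:ℤ) * |e| := by
      rw [abs_mul, abs_of_pos hℓpos]
    rw [h2] at h1
    have h3 : |e| ≤ ((4 * m + 3 : ℕ) : ℤ) := by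
      by_contra hcon
      push_neg at hcon
      have : ((4 * m + 3 : ℕ) : ℤ) * (ℓ:ℤ) < (ℓ:ℤ) * |e| := by
        calc ((4 * m + 3 : ℕ) : ℤ) * (ℓ:ℤ) < |e| * (ℓ:ℤ) := by
              apply mul_lt_mul_of_pos_right hcon hℓpos
          _ = (ℓ:ℤ) * |e| := mul_comm _ _
      linarith
    exact_mod_cast (by rwa [Int.abs_eq_natAbs, Nat.cast_le] at h3 : e.natAbs ≤ ((4*m+3:ℕ):ℤ).toNat)
  -- final construction
  set c : ℤ := if 0 ≤ e then (ℓ:ℤ) else -(ℓ:ℤ) with hc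
  have hcA : c ∈ A := by
    rw [hc]
    split
    · exact hℓA
    · exact negmem _ hℓA
  set r : ℕ := 20 * m - (2 * m + 3) - e.natAbs with hr
  have hrtotal : (2 * m + 3) + e.natAbs + r = 20 * m := by omega
  set L : List ℤ := l' ++ List.replicate e.natAbs c ++ List.replicate r 0 with hL
  have hLlen : L.length = 20 * m := by
    rw [hL]
    simp only [List.length_append, List.length_replicate]
    rw [hlen', hlen]
    omega
  have hLmem : ∀ x ∈ L, x ∈ A := by
    intro x hx
    rw [hL] at hx
    rcases List.mem_append.1 hx with hx | hx
    · rcases List.mem_append.1 hx with hx | hx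
      · exact hmem' x hx
      · rw [List.eq_of_mem_replicate hx]; exact hcA
    · rw [List.eq_of_mem_replicate hx]; exact h0
  have hLsum : L.sum = z := by
    rw [hL]
    rw [List.sum_append, List.sum_append, List.sum_replicate, List.sum_replicate]
    rw [smul_zero, add_zero, nsmul_eq_mul]
    rw [← hw]
    have : (e.natAbs : ℤ) * c = (ℓ:ℤ) * e := by
      rw [hc]
      by_cases hsgn : 0 ≤ e
      · rw [if_pos hsgn, Int.natAbs_of_nonneg hsgn, mul_comm]
      · push_neg at hsgn
        have : (e.natAbs : ℤ) = -e := by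
          rw [Int.abs_eq_natAbs] at *
          omega
        rw [if_neg (not_le.2 hsgn), this]
        ring
    rw [this]
    omega
  have hmain := listsum_mem_nsmul A L hLmem
  rw [hLlen, hLsum] at hmain
  exact hmain
end

section
/- Compression loss bound: let P = ∏_{i=1}^d [0, n_i] ∩ ℤ^d with each n_i ≥ n ≥ 1, and let Y ⊆ P be a down-set (i.e., compressed in every coordinate direction: if y ∈ Y and y' ≤ y coordinatewise with y' ∈ P then y' ∈ Y). Let Y' = {y ∈ Y : y + {0,1}^d ⊆ Y}. Then |Y'| ≥ |Y| − d·n^{−1}·|P|. -/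
open Pointwise

theorem compression_loss_bound (d n : ℕ) (hd : 0 < d) (hn : 0 < n)
    (ns : Fin d → ℕ) (hns : ∀ i, n ≤ ns i)
    (P : Finset (Fin d → ℤ)) (hP : P = Fintype.piFinset (fun i => Finset.Icc 0 (ns i : ℤ)))
    (Y : Finset (Fin d → ℤ)) (hYP : Y ⊆ P)
    (hdown : ∀ y ∈ Y, ∀ y' ∈ P, (∀ i, y' i ≤ y i) → y' ∈ Y)
    (Y' : Finset (Fin d → ℤ))
    (hY' : Y' = Y.filter (fun y =>
      ∀ c ∈ Fintype.piFinset (fun _ : Fin d => ({0, 1} : Finset ℤ)), y + c ∈ Y)) :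
    ((Y'.card : ℝ)) ≥ Y.card - d * (n : ℝ)⁻¹ * P.card := by
  haveI : Nonempty (Fin d) := ⟨⟨0, hd⟩⟩
  have huniv : (Finset.univ : Finset (Fin d)).Nonempty := Finset.univ_nonempty
  have hPmem : ∀ x : Fin d → ℤ, x ∈ P ↔ ∀ i, 0 ≤ x i ∧ x i ≤ (ns i : ℤ) := by
    intro x
    simp [hP, Fintype.mem_piFinset, Finset.mem_Icc]
  set m : (Fin d → ℤ) → ℤ := fun y => Finset.univ.inf' huniv y with hm
  have hmle : ∀ y : Fin d → ℤ, ∀ i, m y ≤ y i := fun y i => Finset.inf'_le _ (Finset.mem_univ i)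
  have hmex : ∀ y : Fin d → ℤ, ∃ i, y i = m y := by
    intro y
    obtain ⟨i, _, hi⟩ := Finset.exists_mem_eq_inf' huniv y
    exact ⟨i, hi.symm⟩
  set D := Y \ Y' with hD
  set φ : (Fin d → ℤ) → (Fin d → ℤ) := fun y => y - (fun _ => m y) with hφ
  set B := P.filter (fun x => ∃ i, x i = 0) with hB
  -- key: if y ∈ Y and y + all-ones is dominated by some z ∈ Y, then y ∈ Y'
  have key : ∀ y ∈ Y, ∀ z ∈ Y, (∀ i, y i + 1 ≤ z i) → y ∈ Y' := by
    intro y hy z hz hyz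
    rw [hY', Finset.mem_filter]
    refine ⟨hy, ?_⟩
    intro c hc
    have hc' : ∀ i, 0 ≤ c i ∧ c i ≤ 1 := by
      intro i
      have := Fintype.mem_piFinset.mp hc i
      simp only [Finset.mem_insert, Finset.mem_singleton] at this
      rcases this with h | h <;> simp [h]
    have hle : ∀ i, (y + c) i ≤ z i := by
      intro i
      have h1 := (hc' i).2
      have h2 := hyz i
      simp only [Pi.add_apply]
      linarith
    have hycP : y + c ∈ P := by
      rw [hPmem]
      intro i
      have h0 := (hPmem y).mp (hYP hy) i
      have hz0 := (hPmem z).mp (hYP hz) i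
      have h1 := (hc' i).1
      have h2 := hle i
      simp only [Pi.add_apply] at h2 ⊢
      constructor
      · linarith [h0.1]
      · linarith [hz0.2]
    exact hdown z hz (y + c) hycP hle
  -- D injects into B
  have hcardD : D.card ≤ B.card := by
    apply Finset.card_le_card_of_injOn φ
    · intro y hy
      rw [hD, Finset.mem_coe, Finset.mem_sdiff] at hy
      obtain ⟨hyY, _⟩ := hy
      have hyP := (hPmem y).mp (hYP hyY)
      obtain ⟨j, hj⟩ := hmex y
      have hm0 : 0 ≤ m y := hj ▸ (hyP j).1
      rw [Finset.mem_coe, hB, Finset.mem_filter]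
      constructor
      · rw [hPmem]
        intro i
        have h0 := hyP i
        have h1 := hmle y i
        simp only [hφ, Pi.sub_apply]
        constructor <;> linarith [h0.1, h0.2]
      · exact ⟨j, by simp [hφ, hj]⟩
    · intro y hy z hz hyz
      rw [Finset.mem_coe, hD, Finset.mem_sdiff] at hy hz
      have heq : ∀ i, y i - m y = z i - m z := by
        intro i
        have := congrFun hyz i
        simpa [hφ] using this
      rcases lt_trichotomy (m y) (m z) with h | h | h
      · exfalso
        apply hy.2
        apply key y hy.1 z hz.1
        intro i
        have := heq i
        linarith
      · funext i
        have := heq i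
        linarith
      · exfalso
        apply hz.2
        apply key z hz.1 y hy.1
        intro i
        have := heq i
        linarith
  -- card of B
  have hBi : ∀ i : Fin d, (P.filter (fun x => x i = 0)).card * n ≤ P.card := by
    intro i
    have hfilter : P.filter (fun x => x i = 0)
        = Fintype.piFinset (fun j => if j = i then ({0} : Finset ℤ) else Finset.Icc 0 (ns j : ℤ)) := by
      ext x
      simp only [Finset.mem_filter, hP, Fintype.mem_piFinset]
      constructor
      · rintro ⟨h1, h2⟩ j
        by_cases hji : j = i
        · subst hji; simp [h2]
        · simp [hji, h1 j]
      · intro h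
        constructor
        · intro j
          by_cases hji : j = i
          · subst hji
            have hx := h j
            simp only [eq_self_iff_true, if_true, Finset.mem_singleton] at hx
            rw [Finset.mem_Icc, hx]
            exact ⟨le_refl 0, Int.natCast_nonneg _⟩
          · have := h j
            simpa [hji] using this
        · have := h i
          simpa using this
    have hcard1 : (P.filter (fun x => x i = 0)).card
        = ∏ j, (if j = i then ({0} : Finset ℤ) else Finset.Icc 0 (ns j : ℤ)).card := by
      rw [hfilter, Fintype.card_piFinset]
    have hcard2 : P.card = ∏ j, (Finset.Icc (0:ℤ) (ns j : ℤ)).card := by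
      rw [hP, Fintype.card_piFinset]
    have hIcc : ∀ j, (Finset.Icc (0:ℤ) (ns j : ℤ)).card = ns j + 1 := by
      intro j
      rw [Int.card_Icc]
      simp
    have hmul : (ns i + 1) * (P.filter (fun x => x i = 0)).card = P.card := by
      rw [hcard1, hcard2]
      rw [← Finset.mul_prod_erase Finset.univ
        (fun j => (if j = i then ({0} : Finset ℤ) else Finset.Icc 0 (ns j : ℤ)).card)
        (Finset.mem_univ i),
        ← Finset.mul_prod_erase Finset.univ
        (fun j => (Finset.Icc (0:ℤ) (ns j : ℤ)).card) (Finset.mem_univ i)]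
      simp only [eq_self_iff_true, if_true, Finset.card_singleton, one_mul, mul_one, hIcc i]
      congr 1
      apply Finset.prod_congr rfl
      intro j hj
      have : j ≠ i := (Finset.mem_erase.mp hj).1
      simp [this]
    calc (P.filter (fun x => x i = 0)).card * n
        ≤ (P.filter (fun x => x i = 0)).card * (ns i + 1) := by
          exact Nat.mul_le_mul le_rfl (le_trans (hns i) (Nat.le_succ _))
      _ = P.card := by rw [← hmul]; ring
  have hBcard : B.card * n ≤ d * P.card := by
    have hsub : B ⊆ Finset.univ.biUnion (fun i => P.filter (fun x => x i = 0)) := by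
      intro x hx
      rw [hB, Finset.mem_filter] at hx
      obtain ⟨hxP, i, hi⟩ := hx
      exact Finset.mem_biUnion.mpr ⟨i, Finset.mem_univ i, Finset.mem_filter.mpr ⟨hxP, hi⟩⟩
    have h1 : B.card ≤ ∑ i, (P.filter (fun x => x i = 0)).card :=
      le_trans (Finset.card_le_card hsub) Finset.card_biUnion_le
    calc B.card * n ≤ (∑ i, (P.filter (fun x => x i = 0)).card) * n :=
          Nat.mul_le_mul_right _ h1
      _ = ∑ i, (P.filter (fun x => x i = 0)).card * n := by rw [Finset.sum_mul]
      _ ≤ ∑ _i : Fin d, P.card := Finset.sum_le_sum (fun i _ => hBi i)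
      _ = d * P.card := by simp [Finset.sum_const, Finset.card_univ]
  -- combine
  have hsplit : D.card + Y'.card = Y.card := by
    apply Finset.card_sdiff_add_card_eq_card
    rw [hY']
    exact Finset.filter_subset _ _
  have hDn : D.card * n ≤ d * P.card := le_trans (Nat.mul_le_mul_right _ hcardD) hBcard
  have hDR : (D.card : ℝ) ≤ d * (n : ℝ)⁻¹ * P.card := by
    have hnR : (0 : ℝ) < n := by positivity
    rw [mul_comm (d : ℝ), mul_assoc, ← div_eq_inv_mul, le_div_iff₀ hnR]
    calc (D.card : ℝ) * n = ((D.card * n : ℕ) : ℝ) := by push_cast; ring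
      _ ≤ ((d * P.card : ℕ) : ℝ) := by exact_mod_cast hDn
      _ = (d : ℝ) * P.card := by push_cast; ring
  have : (Y.card : ℝ) = D.card + Y'.card := by exact_mod_cast hsplit.symm
  linarith
end
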